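/- arXiv:2310.10559 — 5 statements merged into one kernel-verified Lean document; each statement's English description precedes it below -/
import Mathlib

section
/- Augmented CATE identifiability: suppose the triple (Y₀, Y₁, U) is conditionally independent of W given σ(H), consistency holds (Y = W·Y₁ + (1−W)·Y₀), and overlap holds (0 < E[W | σ(H)] < 1 almost surely). Then, writing 𝓖' = σ(H) ⊔ σ(U), one has 0 < E[W | 𝓖'] < 1 almost surely, and almost surely E[Y₁ − Y₀ | 𝓖'] = E[W·Y | 𝓖'] / E[W | 𝓖'] − E[(1−W)·Y | 𝓖'] / E[(1−W) | 𝓖']. -/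
open MeasureTheory ProbabilityTheory Filter

/-- π-system extension: if two integrable functions have equal integrals on all sets of the
form `B ∩ C` with `B ∈ m₁`, `C ∈ m₂`, then they have equal integrals on all `m₁ ⊔ m₂`-sets. -/
lemma aux_setIntegral_sup {Ω : Type*} {mΩ : MeasurableSpace Ω} (P : Measure Ω) [IsFiniteMeasure P]
    (m₁ m₂ : MeasurableSpace Ω) (h₁ : m₁ ≤ mΩ) (h₂ : m₂ ≤ mΩ)
    (f g : Ω → ℝ) (hf : Integrable f P) (hg : Integrable g P)
    (h : ∀ B C, MeasurableSet[m₁] B → MeasurableSet[m₂] C →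
      ∫ ω in B ∩ C, f ω ∂P = ∫ ω in B ∩ C, g ω ∂P) :
    ∀ s, MeasurableSet[m₁ ⊔ m₂] s → ∫ ω in s, f ω ∂P = ∫ ω in s, g ω ∂P := by
  letI : MeasurableSpace Ω := mΩ
  have hle : m₁ ⊔ m₂ ≤ mΩ := sup_le h₁ h₂
  set S : Set (Set Ω) :=
    {s | ∃ B C, MeasurableSet[m₁] B ∧ MeasurableSet[m₂] C ∧ s = B ∩ C} with hS
  have hgen : m₁ ⊔ m₂ = MeasurableSpace.generateFrom S := by
    refine le_antisymm (sup_le ?_ ?_) (MeasurableSpace.generateFrom_le ?_)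
    · intro s hs
      exact MeasurableSpace.measurableSet_generateFrom
        ⟨s, Set.univ, hs, MeasurableSet.univ, (Set.inter_univ s).symm⟩
    · intro s hs
      exact MeasurableSpace.measurableSet_generateFrom
        ⟨Set.univ, s, MeasurableSet.univ, hs, (Set.univ_inter s).symm⟩
    · rintro t ⟨B, C, hB, hC, rfl⟩
      exact MeasurableSet.inter ((le_sup_left : m₁ ≤ m₁ ⊔ m₂) B hB)
        ((le_sup_right : m₂ ≤ m₁ ⊔ m₂) C hC)
  have hpi : IsPiSystem S := by
    rintro s ⟨B, C, hB, hC, rfl⟩ t ⟨B', C', hB', hC', rfl⟩ -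
    exact ⟨B ∩ B', C ∩ C', hB.inter hB', hC.inter hC',
      (Set.inter_inter_inter_comm B C B' C')⟩
  have huniv : ∫ ω, f ω ∂P = ∫ ω, g ω ∂P := by
    have := h Set.univ Set.univ MeasurableSet.univ MeasurableSet.univ
    simpa using this
  intro s hs
  refine MeasurableSpace.induction_on_inter
    (C := fun t _ => ∫ ω in t, f ω ∂P = ∫ ω in t, g ω ∂P)
    (m := m₁ ⊔ m₂) hgen hpi (by simp) ?_ ?_ ?_ s hs
  · rintro t ⟨B, C, hB, hC, rfl⟩
    exact h B C hB hC
  · intro t htm ht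
    have htm' : MeasurableSet t := hle t htm
    have h1 := integral_add_compl htm' hf
    have h2 := integral_add_compl htm' hg
    linarith
  · intro F hdisj hmF hF
    rw [integral_iUnion (fun i => hle _ (hmF i)) hdisj hf.integrableOn,
      integral_iUnion (fun i => hle _ (hmF i)) hdisj hg.integrableOn]
    exact tsum_congr hF

/-- product of an a.e.-strongly measurable function bounded by `c` with an integrable
function is integrable. -/
lemma aux_integrable_mul {Ω : Type*} {mΩ : MeasurableSpace Ω} {P : Measure Ω}
    {f g : Ω → ℝ} (hfm : AEStronglyMeasurable f P) (hg : Integrable g P)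
    (c : ℝ) (hc : ∀ ω, ‖f ω‖ ≤ c) :
    Integrable (fun ω => f ω * g ω) P := by
  refine Integrable.mono' (hg.norm.const_mul c) (hfm.mul hg.aestronglyMeasurable)
    (ae_of_all _ fun ω => ?_)
  calc ‖f ω * g ω‖ = ‖f ω‖ * ‖g ω‖ := norm_mul _ _
    _ ≤ c * ‖g ω‖ := mul_le_mul_of_nonneg_right (hc ω) (norm_nonneg _)

/-- **Augmented CATE identifiability** (Proposition 2): if the triple `(Y₀, Y₁, U)` is
conditionally independent of `W` given `σ(H)`, consistency holds, and overlap holds for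
`σ(H)`, then overlap holds for the augmented σ-algebra `𝓖' = σ(H) ⊔ σ(U)` and the
CATE augmented with the adjustment variables `U` is identified. -/
theorem augmented_cate_identifiability
    {Ω : Type*} [mΩ : MeasurableSpace Ω] [StandardBorelSpace Ω]
    {𝓗 𝓤 : Type*} [MeasurableSpace 𝓗] [MeasurableSpace 𝓤] [StandardBorelSpace 𝓤]
    (P : Measure Ω) [IsProbabilityMeasure P]
    (Y₀ Y₁ W Y : Ω → ℝ) (H : Ω → 𝓗) (U : Ω → 𝓤)
    (hY₀ : Measurable Y₀) (hY₁ : Measurable Y₁)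
    (hW : Measurable W) (hH : Measurable H) (hU : Measurable U)
    (hY₀int : Integrable Y₀ P) (hY₁int : Integrable Y₁ P)
    (hWvals : ∀ ω, W ω = 0 ∨ W ω = 1)
    (hconsistency : ∀ ω, Y ω = W ω * Y₁ ω + (1 - W ω) * Y₀ ω)
    (hignorability : CondIndepFun (MeasurableSpace.comap H inferInstance) hH.comap_le
      (fun ω => (Y₀ ω, Y₁ ω, U ω)) W P)
    (hoverlap : ∀ᵐ ω ∂P,
      0 < (P[W | MeasurableSpace.comap H inferInstance]) ω ∧
        (P[W | MeasurableSpace.comap H inferInstance]) ω < 1)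
    (𝓖' : MeasurableSpace Ω)
    (h𝓖' : 𝓖' = MeasurableSpace.comap H inferInstance ⊔ MeasurableSpace.comap U inferInstance) :
    (∀ᵐ ω ∂P, 0 < (P[W | 𝓖']) ω ∧ (P[W | 𝓖']) ω < 1) ∧
    ∀ᵐ ω ∂P,
      (P[fun ω => Y₁ ω - Y₀ ω | 𝓖']) ω =
        (P[fun ω => W ω * Y ω | 𝓖']) ω / (P[W | 𝓖']) ω
        - (P[fun ω => (1 - W ω) * Y ω | 𝓖']) ω / (P[fun ω => 1 - W ω | 𝓖']) ω := by
  subst h𝓖'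
  set mH : MeasurableSpace Ω := MeasurableSpace.comap H inferInstance with hmH_def
  set mU : MeasurableSpace Ω := MeasurableSpace.comap U inferInstance with hmU_def
  have hmHle : mH ≤ mΩ := hH.comap_le
  have hmUle : mU ≤ mΩ := hU.comap_le
  have hGle : mH ⊔ mU ≤ mΩ := sup_le hmHle hmUle
  set V : Ω → ℝ × ℝ × 𝓤 := fun ω => (Y₀ ω, Y₁ ω, U ω) with hV_def
  have hVm : Measurable[mΩ] V := hY₀.prodMk (hY₁.prodMk hU)
  set mV : MeasurableSpace Ω := MeasurableSpace.comap V inferInstance with hmV_def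
  letI : MeasurableSpace Ω := mΩ
  have hmVle : mV ≤ mΩ := hVm.comap_le
  have hVmV : Measurable[mV] V := Measurable.of_comap_le le_rfl
  have hUV : mU ≤ mV := by
    have hcomp : U = (fun p : ℝ × ℝ × 𝓤 => p.2.2) ∘ V := rfl
    rw [hmU_def, hcomp, ← MeasurableSpace.comap_comp]
    exact MeasurableSpace.comap_mono (measurable_snd.comp measurable_snd).comap_le
  have hY₀V : Measurable[mV] Y₀ := measurable_fst.comp hVmV
  have hY₁V : Measurable[mV] Y₁ := (measurable_fst.comp measurable_snd).comp hVmV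
  set e : Ω → ℝ := P[W | mH] with he_def
  have heSM : StronglyMeasurable[mH] e := stronglyMeasurable_condExp
  have heInt : Integrable e P := integrable_condExp
  have hWnorm : ∀ ω, ‖W ω‖ ≤ 1 := fun ω => by rcases hWvals ω with h | h <;> simp [h]
  have hWint : Integrable W P :=
    Integrable.mono' (integrable_const 1) hW.aestronglyMeasurable (ae_of_all _ hWnorm)
  have he01 : ∀ᵐ ω ∂P, 0 ≤ e ω ∧ e ω ≤ 1 := by
    have h0 : (0 : Ω → ℝ) ≤ᵐ[P] e :=
      condExp_nonneg (ae_of_all _ fun ω => by rcases hWvals ω with h | h <;> simp [h])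
    have h1 : e ≤ᵐ[P] P[(fun _ => (1 : ℝ)) | mH] :=
      condExp_mono hWint (integrable_const 1)
        (ae_of_all _ fun ω => by rcases hWvals ω with h | h <;> simp [h])
    rw [condExp_const hmHle] at h1
    filter_upwards [h0, h1] with ω a b
    exact ⟨a, b⟩
  -- W as an indicator
  have hWD : W = (W ⁻¹' {1}).indicator (fun _ => (1 : ℝ)) := by
    funext ω
    rcases hWvals ω with h | h <;>
      simp [Set.indicator_apply, Set.mem_preimage, Set.mem_singleton_iff, h]
  have heD : (P⟦(W ⁻¹' {1}) | mH⟧) = e :=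
    (congrArg (fun f : Ω → ℝ => P[f | mH]) hWD.symm).trans he_def.symm
  have hCI := (condIndepFun_iff_condExp_inter_preimage_eq_mul
    (hm' := hH.comap_le) hVm hW).mp hignorability
  have hindmul : ∀ (T : Set Ω) (h : Ω → ℝ) (ω : Ω),
      T.indicator (fun _ => (1 : ℝ)) ω * h ω = T.indicator h ω := by
    intro T h ω
    by_cases hω : ω ∈ T <;> simp [hω]
  -- Key lemma: for every `mV`-set `T` and `mH`-set `B`,
  -- `∫_B 1_T W = ∫_B 1_T e`.
  have hK : ∀ T, MeasurableSet[mV] T → ∀ B, MeasurableSet[mH] B →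
      ∫ ω in B, T.indicator (fun _ => (1 : ℝ)) ω * W ω ∂P
        = ∫ ω in B, T.indicator (fun _ => (1 : ℝ)) ω * e ω ∂P := by
    rintro T ⟨s, hs, rfl⟩ B hB
    have hTmeas : MeasurableSet (V ⁻¹' s) := hVm hs
    have hDmeas : MeasurableSet (W ⁻¹' {1}) := hW (measurableSet_singleton 1)
    have hBmeas : MeasurableSet B := hmHle B hB
    have hfun1 : (fun ω => (V ⁻¹' s).indicator (fun _ => (1 : ℝ)) ω * W ω)
        = (V ⁻¹' s ∩ W ⁻¹' {1}).indicator (fun _ => (1 : ℝ)) := by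
      funext ω
      rcases hWvals ω with h | h <;> by_cases hT : ω ∈ V ⁻¹' s <;>
        simp [Set.indicator_apply, hT, Set.mem_preimage, Set.mem_singleton_iff, h]
    have hint1 : Integrable ((V ⁻¹' s ∩ W ⁻¹' {1}).indicator (fun _ => (1 : ℝ))) P :=
      (integrable_const (1 : ℝ)).indicator (hTmeas.inter hDmeas)
    have hindT_int : Integrable ((V ⁻¹' s).indicator (fun _ => (1 : ℝ))) P :=
      (integrable_const (1 : ℝ)).indicator hTmeas
    have hmulint : Integrable (e * (V ⁻¹' s).indicator fun _ => (1 : ℝ)) P := by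
      refine Integrable.mono' heInt.norm
        ((heSM.mono hmHle).aestronglyMeasurable.mul hindT_int.aestronglyMeasurable)
        (ae_of_all _ fun ω => ?_)
      by_cases hT : ω ∈ V ⁻¹' s <;>
        simp [Set.indicator_apply, hT, abs_nonneg, Real.norm_eq_abs]
    have hstar := hCI s {1} hs (measurableSet_singleton 1)
    have hpull := condExp_mul_of_stronglyMeasurable_left (μ := P) heSM hmulint hindT_int
    rw [hfun1, ← setIntegral_condExp hmHle hint1 hB]
    calc ∫ ω in B, (P⟦V ⁻¹' s ∩ W ⁻¹' {1} | mH⟧) ω ∂P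
        = ∫ ω in B, (P⟦V ⁻¹' s | mH⟧) ω * (P⟦W ⁻¹' {1} | mH⟧) ω ∂P :=
          setIntegral_congr_ae hBmeas (hstar.mono fun ω hω _ => hω)
      _ = ∫ ω in B, e ω * (P⟦V ⁻¹' s | mH⟧) ω ∂P := by
          rw [heD]
          exact setIntegral_congr_ae hBmeas (ae_of_all _ fun ω _ => mul_comm _ _)
      _ = ∫ ω in B, (P[e * (V ⁻¹' s).indicator fun _ => (1 : ℝ) | mH]) ω ∂P :=
          setIntegral_congr_ae hBmeas (hpull.mono fun ω hω _ => hω.symm)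
      _ = ∫ ω in B, (e * (V ⁻¹' s).indicator fun _ => (1 : ℝ)) ω ∂P :=
          setIntegral_condExp hmHle hmulint hB
      _ = ∫ ω in B, (V ⁻¹' s).indicator (fun _ => (1 : ℝ)) ω * e ω ∂P :=
          setIntegral_congr_ae hBmeas (ae_of_all _ fun ω _ => mul_comm _ _)
  -- master lemma
  have hmaster : ∀ g : Ω → ℝ, Measurable[mV] g → Integrable g P →
      ∀ B C, MeasurableSet[mH] B → MeasurableSet[mU] C →
      ∫ ω in B ∩ C, g ω * W ω ∂P = ∫ ω in B ∩ C, g ω * e ω ∂P := by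
    intro g hgV hgint B C hB hC
    have hCV : MeasurableSet[mV] C := hUV C hC
    have hBC : MeasurableSet (B ∩ C) := (hmHle B hB).inter (hmUle C hC)
    have hind : ∀ T, MeasurableSet[mV] T →
        ∫ ω in B ∩ C, T.indicator (fun _ => (1 : ℝ)) ω * W ω ∂P
          = ∫ ω in B ∩ C, T.indicator (fun _ => (1 : ℝ)) ω * e ω ∂P := by
      intro T hT
      have hTC : MeasurableSet[mV] (T ∩ C) := hT.inter hCV
      have conv1 : ∀ h : Ω → ℝ,
          ∫ ω in B ∩ C, T.indicator (fun _ => (1 : ℝ)) ω * h ω ∂P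
            = ∫ ω in B, (T ∩ C).indicator (fun _ => (1 : ℝ)) ω * h ω ∂P := by
        intro h
        calc ∫ ω in B ∩ C, T.indicator (fun _ => (1 : ℝ)) ω * h ω ∂P
            = ∫ ω in B ∩ C, T.indicator h ω ∂P := by
              exact setIntegral_congr_ae hBC (ae_of_all _ fun ω _ => hindmul T h ω)
          _ = ∫ ω in (B ∩ C) ∩ T, h ω ∂P := setIntegral_indicator (hmVle T hT)
          _ = ∫ ω in B ∩ (T ∩ C), h ω ∂P := by
              rw [show (B ∩ C) ∩ T = B ∩ (T ∩ C) by
                ext ω; simp only [Set.mem_inter_iff]; tauto]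
          _ = ∫ ω in B, (T ∩ C).indicator h ω ∂P :=
              (setIntegral_indicator (hmVle _ hTC)).symm
          _ = ∫ ω in B, (T ∩ C).indicator (fun _ => (1 : ℝ)) ω * h ω ∂P :=
              setIntegral_congr_ae (hmHle B hB)
                (ae_of_all _ fun ω _ => (hindmul (T ∩ C) h ω).symm)
      rw [conv1 W, conv1 e]
      exact hK (T ∩ C) hTC B hB
    -- simple functions
    have hsimple : ∀ s : @SimpleFunc Ω mV ℝ,
        ∫ ω in B ∩ C, s ω * W ω ∂P = ∫ ω in B ∩ C, s ω * e ω ∂P := by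
      intro s
      refine @SimpleFunc.induction Ω ℝ mV _
        (fun s => ∫ ω in B ∩ C, s ω * W ω ∂P = ∫ ω in B ∩ C, s ω * e ω ∂P) ?_ ?_ s
      · intro c T hT
        trans (∫ ω in B ∩ C, c * (T.indicator (fun _ => (1 : ℝ)) ω * W ω) ∂P)
        · refine setIntegral_congr_ae hBC (ae_of_all _ fun ω _ => ?_)
          by_cases hω : ω ∈ T <;>
            simp [SimpleFunc.piecewise_apply, SimpleFunc.coe_const, hω,
              Set.indicator_apply, mul_assoc]
        trans (∫ ω in B ∩ C, c * (T.indicator (fun _ => (1 : ℝ)) ω * e ω) ∂P)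
        · rw [integral_const_mul, integral_const_mul, hind T hT]
        · refine (setIntegral_congr_ae hBC (ae_of_all _ fun ω _ => ?_)).symm
          by_cases hω : ω ∈ T <;>
            simp [SimpleFunc.piecewise_apply, SimpleFunc.coe_const, hω,
              Set.indicator_apply, mul_assoc]
      · intro f g hdisj hf hg
        have hbnd : ∀ f : @SimpleFunc Ω mV ℝ, ∃ c, ∀ ω, ‖f ω‖ ≤ c := by
          letI := mV; exact fun f => SimpleFunc.exists_forall_norm_le f
        have hsm : ∀ f : @SimpleFunc Ω mV ℝ, StronglyMeasurable[mV] (⇑f) := by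
          letI := mV; exact fun f => SimpleFunc.stronglyMeasurable f
        obtain ⟨cf, hcf⟩ := hbnd f
        obtain ⟨cg, hcg⟩ := hbnd g
        have hfSM : AEStronglyMeasurable (⇑f) P :=
          ((hsm f).mono hmVle).aestronglyMeasurable
        have hgSM : AEStronglyMeasurable (⇑g) P :=
          ((hsm g).mono hmVle).aestronglyMeasurable
        have int1 : Integrable (fun ω => f ω * W ω) P := aux_integrable_mul hfSM hWint cf hcf
        have int2 : Integrable (fun ω => g ω * W ω) P := aux_integrable_mul hgSM hWint cg hcg
        have int3 : Integrable (fun ω => f ω * e ω) P := aux_integrable_mul hfSM heInt cf hcf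
        have int4 : Integrable (fun ω => g ω * e ω) P := aux_integrable_mul hgSM heInt cg hcg
        have hcoe : ∀ h : Ω → ℝ, (fun ω => (f + g) ω * h ω)
            = fun ω => f ω * h ω + g ω * h ω := by
          intro h; funext ω; simp [add_mul]
        rw [hcoe W, hcoe e, integral_add int1.integrableOn int2.integrableOn,
          integral_add int3.integrableOn int4.integrableOn, hf, hg]
    -- approximation
    obtain ⟨G, hGsm, hGnorm, hGtend⟩ :
        ∃ G : ℕ → @SimpleFunc Ω mV ℝ, (∀ n, StronglyMeasurable[mV] (⇑(G n))) ∧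
          (∀ n ω, ‖G n ω‖ ≤ ‖g ω‖ + ‖g ω‖) ∧
          (∀ ω, Tendsto (fun n => G n ω) atTop (nhds (g ω))) := by
      letI := mV
      refine ⟨fun n => SimpleFunc.approxOn g hgV Set.univ 0 (Set.mem_univ 0) n,
        fun n => SimpleFunc.stronglyMeasurable _,
        fun n ω => SimpleFunc.norm_approxOn_zero_le hgV _ ω n,
        fun ω => SimpleFunc.tendsto_approxOn hgV _ (by simp)⟩
    have hGSM : ∀ n, AEStronglyMeasurable (fun ω => G n ω) (P.restrict (B ∩ C)) := fun n =>
      (((hGsm n).mono hmVle).aestronglyMeasurable).restrict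
    have hbound_int : Integrable (fun ω => ‖g ω‖ + ‖g ω‖) (P.restrict (B ∩ C)) :=
      (hgint.norm.add hgint.norm).integrableOn
    have lim1 : Tendsto (fun n => ∫ ω in B ∩ C, G n ω * W ω ∂P) atTop
        (nhds (∫ ω in B ∩ C, g ω * W ω ∂P)) := by
      refine tendsto_integral_of_dominated_convergence (fun ω => ‖g ω‖ + ‖g ω‖)
        (fun n => (hGSM n).mul hW.aestronglyMeasurable.restrict) hbound_int
        (fun n => ae_of_all _ fun ω => ?_) (ae_of_all _ fun ω => (hGtend ω).mul_const (W ω))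
      calc ‖G n ω * W ω‖ = ‖G n ω‖ * ‖W ω‖ := norm_mul _ _
        _ ≤ (‖g ω‖ + ‖g ω‖) * 1 :=
            mul_le_mul (hGnorm n ω) (hWnorm ω) (norm_nonneg _)
              (by positivity)
        _ = ‖g ω‖ + ‖g ω‖ := mul_one _
    have lim2 : Tendsto (fun n => ∫ ω in B ∩ C, G n ω * e ω ∂P) atTop
        (nhds (∫ ω in B ∩ C, g ω * e ω ∂P)) := by
      refine tendsto_integral_of_dominated_convergence (fun ω => ‖g ω‖ + ‖g ω‖)
        (fun n => (hGSM n).mul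
          ((heSM.mono hmHle).aestronglyMeasurable.restrict)) hbound_int
        (fun n => ?_) (ae_of_all _ fun ω => (hGtend ω).mul_const (e ω))
      filter_upwards [ae_restrict_of_ae he01] with ω hω
      calc ‖G n ω * e ω‖ = ‖G n ω‖ * ‖e ω‖ := norm_mul _ _
        _ ≤ (‖g ω‖ + ‖g ω‖) * 1 := by
            refine mul_le_mul (hGnorm n ω) ?_ (norm_nonneg _) (by positivity)
            rw [Real.norm_eq_abs, abs_le]
            exact ⟨by linarith [hω.1], hω.2⟩
        _ = ‖g ω‖ + ‖g ω‖ := mul_one _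
    have heq : ∀ n, ∫ ω in B ∩ C, G n ω * W ω ∂P = ∫ ω in B ∩ C, G n ω * e ω ∂P :=
      fun n => hsimple _
    exact tendsto_nhds_unique ((tendsto_congr heq).mp lim1) lim2
  -- consequences of consistency
  have hWY : (fun ω => W ω * Y ω) = fun ω => Y₁ ω * W ω := by
    funext ω
    rw [hconsistency ω]
    rcases hWvals ω with h | h <;> rw [h] <;> ring
  have hW'Y : (fun ω => (1 - W ω) * Y ω) = fun ω => Y₀ ω * (1 - W ω) := by
    funext ω
    rw [hconsistency ω]
    rcases hWvals ω with h | h <;> rw [h] <;> ring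
  -- overlap for the augmented σ-algebra
  have hEW : P[W | mH ⊔ mU] =ᵐ[P] e := by
    refine (ae_eq_condExp_of_forall_setIntegral_eq hGle hWint
      (fun s _ _ => heInt.integrableOn) ?_
      (StronglyMeasurable.aestronglyMeasurable (μ := P)
        (heSM.mono (le_sup_left : mH ≤ mH ⊔ mU)))).symm
    intro s hs _
    refine aux_setIntegral_sup P mH mU hmHle hmUle e W heInt hWint ?_ s hs
    intro B C hB hC
    have := hmaster (fun _ => (1 : ℝ)) measurable_const (integrable_const 1) B C hB hC
    simpa using this.symm
  -- conditional expectations of the products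
  have heY₁int : Integrable (fun ω => e ω * Y₁ ω) P := by
    refine Integrable.mono' hY₁int.norm
      ((heSM.mono hmHle).aestronglyMeasurable.mul hY₁.aestronglyMeasurable) ?_
    filter_upwards [he01] with ω hω
    rw [Real.norm_eq_abs, Real.norm_eq_abs, abs_mul]
    have : |e ω| ≤ 1 := by rw [abs_le]; exact ⟨by linarith [hω.1], hω.2⟩
    calc |e ω| * |Y₁ ω| ≤ 1 * |Y₁ ω| := mul_le_mul_of_nonneg_right this (abs_nonneg _)
      _ = |Y₁ ω| := one_mul _
  have heY₀int : Integrable (fun ω => (1 - e ω) * Y₀ ω) P := by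
    refine Integrable.mono' (hY₀int.norm.const_mul 2)
      (((stronglyMeasurable_const.sub heSM).mono hmHle).aestronglyMeasurable.mul
        hY₀.aestronglyMeasurable) ?_
    filter_upwards [he01] with ω hω
    rw [Real.norm_eq_abs, abs_mul]
    have : |1 - e ω| ≤ 2 := by rw [abs_le]; constructor <;> linarith [hω.1, hω.2]
    calc |1 - e ω| * |Y₀ ω| ≤ 2 * |Y₀ ω| := mul_le_mul_of_nonneg_right this (abs_nonneg _)
      _ = 2 * ‖Y₀ ω‖ := rfl
  have hEWY : P[fun ω => W ω * Y ω | mH ⊔ mU]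
      =ᵐ[P] fun ω => e ω * (P[Y₁ | mH ⊔ mU]) ω := by
    rw [hWY]
    have hfint : Integrable (fun ω => Y₁ ω * W ω) P := by
      refine Integrable.mono' hY₁int.norm
        ((hY₁.mul hW).aestronglyMeasurable) (ae_of_all _ fun ω => ?_)
      calc ‖Y₁ ω * W ω‖ = ‖Y₁ ω‖ * ‖W ω‖ := norm_mul _ _
        _ ≤ ‖Y₁ ω‖ * 1 := mul_le_mul_of_nonneg_left (hWnorm ω) (norm_nonneg _)
        _ = ‖Y₁ ω‖ := mul_one _
    have hbd : Integrable (fun ω => ‖(P[Y₁ | mH ⊔ mU]) ω‖) P := integrable_condExp.norm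
    have hgint : Integrable (fun ω => e ω * (P[Y₁ | mH ⊔ mU]) ω) P := by
      refine Integrable.mono' hbd
        ((heSM.mono hmHle).aestronglyMeasurable.mul
          (stronglyMeasurable_condExp.mono hGle).aestronglyMeasurable) ?_
      filter_upwards [he01] with ω hω
      rw [Real.norm_eq_abs, Real.norm_eq_abs, abs_mul]
      have h1 : |e ω| ≤ 1 := by rw [abs_le]; exact ⟨by linarith [hω.1], hω.2⟩
      calc |e ω| * |(P[Y₁ | mH ⊔ mU]) ω| ≤ 1 * |(P[Y₁ | mH ⊔ mU]) ω| :=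
            mul_le_mul_of_nonneg_right h1 (abs_nonneg _)
        _ = |(P[Y₁ | mH ⊔ mU]) ω| := one_mul _
    have hgsm' : StronglyMeasurable[mH ⊔ mU] (e * (P[Y₁ | mH ⊔ mU])) :=
      (heSM.mono (le_sup_left : mH ≤ mH ⊔ mU)).mul stronglyMeasurable_condExp
    have hgsm : AEStronglyMeasurable[mH ⊔ mU]
        (fun ω => e ω * (P[Y₁ | mH ⊔ mU]) ω) P :=
      hgsm'.aestronglyMeasurable.congr (ae_of_all _ fun ω => rfl)
    refine (ae_eq_condExp_of_forall_setIntegral_eq hGle hfint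
      (fun s _ _ => hgint.integrableOn) ?_ hgsm).symm
    intro s hs _
    refine aux_setIntegral_sup P mH mU hmHle hmUle _ _ hgint hfint ?_ s hs
    intro B C hB hC
    have hBCm : MeasurableSet[mH ⊔ mU] (B ∩ C) :=
      MeasurableSet.inter ((le_sup_left : mH ≤ mH ⊔ mU) B hB)
        ((le_sup_right : mU ≤ mH ⊔ mU) C hC)
    have heY₁int' : Integrable (e * Y₁) P := heY₁int
    have hpull := condExp_mul_of_stronglyMeasurable_left (μ := P) (m := mH ⊔ mU)
      (heSM.mono le_sup_left) heY₁int' hY₁int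
    calc ∫ ω in B ∩ C, e ω * (P[Y₁ | mH ⊔ mU]) ω ∂P
        = ∫ ω in B ∩ C, (P[e * Y₁ | mH ⊔ mU]) ω ∂P :=
          setIntegral_congr_ae (hGle _ hBCm) (hpull.mono fun ω hω _ => hω.symm)
      _ = ∫ ω in B ∩ C, (e * Y₁) ω ∂P := setIntegral_condExp hGle heY₁int' hBCm
      _ = ∫ ω in B ∩ C, Y₁ ω * e ω ∂P :=
          setIntegral_congr_ae (hGle _ hBCm) (ae_of_all _ fun ω _ => mul_comm _ _)
      _ = ∫ ω in B ∩ C, Y₁ ω * W ω ∂P := (hmaster Y₁ hY₁V hY₁int B C hB hC).symm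
  have hEW'Y : P[fun ω => (1 - W ω) * Y ω | mH ⊔ mU]
      =ᵐ[P] fun ω => (1 - e ω) * (P[Y₀ | mH ⊔ mU]) ω := by
    rw [hW'Y]
    have hfint : Integrable (fun ω => Y₀ ω * (1 - W ω)) P := by
      refine Integrable.mono' hY₀int.norm
        ((hY₀.mul (measurable_const.sub hW)).aestronglyMeasurable)
        (ae_of_all _ fun ω => ?_)
      have h1W : ‖1 - W ω‖ ≤ 1 := by rcases hWvals ω with h | h <;> simp [h]
      calc ‖Y₀ ω * (1 - W ω)‖ = ‖Y₀ ω‖ * ‖1 - W ω‖ := norm_mul _ _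
        _ ≤ ‖Y₀ ω‖ * 1 := mul_le_mul_of_nonneg_left h1W (norm_nonneg _)
        _ = ‖Y₀ ω‖ := mul_one _
    have hbd : Integrable (fun ω => 2 * ‖(P[Y₀ | mH ⊔ mU]) ω‖) P :=
      integrable_condExp.norm.const_mul 2
    have hgint : Integrable (fun ω => (1 - e ω) * (P[Y₀ | mH ⊔ mU]) ω) P := by
      refine Integrable.mono' hbd
        (((stronglyMeasurable_const.sub heSM).mono hmHle).aestronglyMeasurable.mul
          (stronglyMeasurable_condExp.mono hGle).aestronglyMeasurable) ?_
      filter_upwards [he01] with ω hω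
      rw [Real.norm_eq_abs, abs_mul]
      have h1 : |1 - e ω| ≤ 2 := by rw [abs_le]; constructor <;> linarith [hω.1, hω.2]
      calc |1 - e ω| * |(P[Y₀ | mH ⊔ mU]) ω| ≤ 2 * |(P[Y₀ | mH ⊔ mU]) ω| :=
            mul_le_mul_of_nonneg_right h1 (abs_nonneg _)
        _ = 2 * ‖(P[Y₀ | mH ⊔ mU]) ω‖ := rfl
    have hgsm' : StronglyMeasurable[mH ⊔ mU]
        (((fun _ : Ω => (1 : ℝ)) - e) * (P[Y₀ | mH ⊔ mU])) :=
      ((stronglyMeasurable_const.sub heSM).mono (le_sup_left : mH ≤ mH ⊔ mU)).mul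
        stronglyMeasurable_condExp
    have hgsm : AEStronglyMeasurable[mH ⊔ mU]
        (fun ω => (1 - e ω) * (P[Y₀ | mH ⊔ mU]) ω) P :=
      hgsm'.aestronglyMeasurable.congr (ae_of_all _ fun ω => rfl)
    refine (ae_eq_condExp_of_forall_setIntegral_eq hGle hfint
      (fun s _ _ => hgint.integrableOn) ?_ hgsm).symm
    intro s hs _
    refine aux_setIntegral_sup P mH mU hmHle hmUle _ _ hgint hfint ?_ s hs
    intro B C hB hC
    have hBCm : MeasurableSet[mH ⊔ mU] (B ∩ C) :=
      MeasurableSet.inter ((le_sup_left : mH ≤ mH ⊔ mU) B hB)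
        ((le_sup_right : mU ≤ mH ⊔ mU) C hC)
    have heY₀int' : Integrable (((fun _ : Ω => (1 : ℝ)) - e) * Y₀) P := heY₀int
    have hpull := condExp_mul_of_stronglyMeasurable_left (μ := P) (m := mH ⊔ mU)
      ((stronglyMeasurable_const.sub heSM).mono le_sup_left) heY₀int' hY₀int
    have hY₀eint : Integrable (fun ω => Y₀ ω * e ω) P := by
      refine Integrable.mono' hY₀int.norm
        (hY₀.aestronglyMeasurable.mul (heSM.mono hmHle).aestronglyMeasurable) ?_
      filter_upwards [he01] with ω hω
      rw [Real.norm_eq_abs, Real.norm_eq_abs, abs_mul]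
      have h1 : |e ω| ≤ 1 := by rw [abs_le]; exact ⟨by linarith [hω.1], hω.2⟩
      calc |Y₀ ω| * |e ω| ≤ |Y₀ ω| * 1 := mul_le_mul_of_nonneg_left h1 (abs_nonneg _)
        _ = |Y₀ ω| := mul_one _
    have hY₀Wint : Integrable (fun ω => Y₀ ω * W ω) P := by
      refine Integrable.mono' hY₀int.norm
        ((hY₀.mul hW).aestronglyMeasurable) (ae_of_all _ fun ω => ?_)
      calc ‖Y₀ ω * W ω‖ = ‖Y₀ ω‖ * ‖W ω‖ := norm_mul _ _
        _ ≤ ‖Y₀ ω‖ * 1 := mul_le_mul_of_nonneg_left (hWnorm ω) (norm_nonneg _)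
        _ = ‖Y₀ ω‖ := mul_one _
    calc ∫ ω in B ∩ C, (1 - e ω) * (P[Y₀ | mH ⊔ mU]) ω ∂P
        = ∫ ω in B ∩ C, (P[((fun _ : Ω => (1 : ℝ)) - e) * Y₀ | mH ⊔ mU]) ω ∂P :=
          setIntegral_congr_ae (hGle _ hBCm) (hpull.mono fun ω hω _ => hω.symm)
      _ = ∫ ω in B ∩ C, (((fun _ : Ω => (1 : ℝ)) - e) * Y₀) ω ∂P :=
          setIntegral_condExp hGle heY₀int' hBCm
      _ = ∫ ω in B ∩ C, (Y₀ ω - Y₀ ω * e ω) ∂P :=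
          setIntegral_congr_ae (hGle _ hBCm) (ae_of_all _ fun ω _ => by
            simp only [Pi.mul_apply, Pi.sub_apply]; ring)
      _ = (∫ ω in B ∩ C, Y₀ ω ∂P) - ∫ ω in B ∩ C, Y₀ ω * e ω ∂P :=
          integral_sub hY₀int.integrableOn hY₀eint.integrableOn
      _ = (∫ ω in B ∩ C, Y₀ ω ∂P) - ∫ ω in B ∩ C, Y₀ ω * W ω ∂P := by
          rw [hmaster Y₀ hY₀V hY₀int B C hB hC]
      _ = ∫ ω in B ∩ C, (Y₀ ω - Y₀ ω * W ω) ∂P :=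
          (integral_sub hY₀int.integrableOn hY₀Wint.integrableOn).symm
      _ = ∫ ω in B ∩ C, Y₀ ω * (1 - W ω) ∂P :=
          setIntegral_congr_ae (hGle _ hBCm) (ae_of_all _ fun ω _ => by ring)
  -- conditional expectation of 1 - W
  have hE1W : P[fun ω => 1 - W ω | mH ⊔ mU] =ᵐ[P] fun ω => 1 - e ω := by
    have h0 : (fun ω => 1 - W ω) = ((fun _ : Ω => (1 : ℝ)) - W) := rfl
    rw [h0]
    filter_upwards [condExp_sub (μ := P) (m := mH ⊔ mU) (integrable_const 1) hWint, hEW]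
      with ω h1 h2
    rw [h1, Pi.sub_apply, congrFun (condExp_const hGle (1 : ℝ)) ω, h2]
  -- conditional expectation of the difference
  have hEdiff : P[fun ω => Y₁ ω - Y₀ ω | mH ⊔ mU]
      =ᵐ[P] fun ω => (P[Y₁ | mH ⊔ mU]) ω - (P[Y₀ | mH ⊔ mU]) ω := by
    have h0 : (fun ω => Y₁ ω - Y₀ ω) = (Y₁ - Y₀) := rfl
    rw [h0]
    filter_upwards [condExp_sub (μ := P) (m := mH ⊔ mU) hY₁int hY₀int] with ω h1
    rw [h1, Pi.sub_apply]
  constructor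
  · filter_upwards [hEW, hoverlap] with ω h1 h2
    rw [h1]
    exact h2
  · filter_upwards [hEW, hEWY, hEW'Y, hE1W, hEdiff, hoverlap] with ω h1 h2 h3 h4 h5 h6
    rw [h5, h2, h3, h1, h4]
    obtain ⟨hpos, hlt⟩ := h6
    rw [mul_div_cancel_left₀ _ (ne_of_gt hpos),
      mul_div_cancel_left₀ _ (by linarith : (1 : ℝ) - e ω ≠ 0)]
end

section
/- An adjustment variable does not change the propensity score: if W : Ω → ℝ is a bounded measurable random variable and W is conditionally independent of the random variable U given a sub-σ-algebra 𝓖, then the conditional expectations coincide, E[W | 𝓖 ⊔ σ(U)] = E[W | 𝓖] almost everywhere. -/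
open MeasureTheory ProbabilityTheory

/-- An adjustment variable does not change the propensity score: if `W` is bounded measurable
and conditionally independent of `U` given a sub-σ-algebra `𝓖`, then
`E[W | 𝓖 ⊔ σ(U)] = E[W | 𝓖]` almost everywhere. -/
theorem condexp_sup_comap_of_condIndepFun
    {Ω : Type*} [mΩ : MeasurableSpace Ω] [StandardBorelSpace Ω]
    {𝓤 : Type*} [MeasurableSpace 𝓤] [StandardBorelSpace 𝓤]
    (P : Measure Ω) [IsProbabilityMeasure P]
    (W : Ω → ℝ) (U : Ω → 𝓤)
    (hW : Measurable W) (hU : Measurable U)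
    (hWbdd : ∃ C : ℝ, ∀ ω, |W ω| ≤ C)
    (𝓖 : MeasurableSpace Ω) (h𝓖 : 𝓖 ≤ mΩ)
    (hindep : CondIndepFun 𝓖 h𝓖 W U P) :
    P[W | 𝓖 ⊔ MeasurableSpace.comap U inferInstance] =ᵐ[P] P[W | 𝓖] := by
  obtain ⟨C, hC⟩ := hWbdd
  letI : MeasurableSpace Ω := mΩ
  have hm₂ : 𝓖 ⊔ MeasurableSpace.comap U inferInstance ≤ mΩ := sup_le h𝓖 hU.comap_le
  have hWint : Integrable W P := by
    refine (memLp_top_of_bound hW.aestronglyMeasurable C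
      (Filter.Eventually.of_forall fun ω => ?_)).integrable le_top
    simpa [Real.norm_eq_abs] using hC ω
  -- The conditional independence hypothesis, rephrased.
  rw [condIndepFun_iff_condExp_inter_preimage_eq_mul hW hU] at hindep
  -- Step 0: the set-integral identity for indicator functions of `σ(W)`-sets,
  -- on π-system sets `G ∩ U⁻¹ B`.
  have key : ∀ s : Set ℝ, MeasurableSet s → ∀ G : Set Ω, MeasurableSet[𝓖] G →
      ∀ B : Set 𝓤, MeasurableSet B →
      ∫ ω in G ∩ U ⁻¹' B, Set.indicator (W ⁻¹' s) (fun _ => (1:ℝ)) ω ∂P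
        = ∫ ω in G ∩ U ⁻¹' B, (P⟦W ⁻¹' s | 𝓖⟧) ω ∂P := by
    intro s hs G hG B hB
    have hWs : MeasurableSet[mΩ] (W ⁻¹' s) := hW hs
    have hUB : MeasurableSet[mΩ] (U ⁻¹' B) := hU hB
    have hIsB_int : Integrable (((W ⁻¹' s) ∩ (U ⁻¹' B)).indicator fun _ => (1:ℝ)) P :=
      (integrable_const (1:ℝ)).indicator (hWs.inter hUB)
    have hIB_int : Integrable ((U ⁻¹' B).indicator fun _ => (1:ℝ)) P :=
      (integrable_const (1:ℝ)).indicator hUB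
    have hIB_bdd : ∀ ω, ‖(U ⁻¹' B).indicator (fun _ => (1:ℝ)) ω‖ ≤ 1 := by
      intro ω
      by_cases h : ω ∈ U ⁻¹' B <;> simp [h]
    -- LHS
    have hLHS : ∫ ω in G ∩ U ⁻¹' B, Set.indicator (W ⁻¹' s) (fun _ => (1:ℝ)) ω ∂P
        = ∫ ω in G, (P⟦W ⁻¹' s | 𝓖⟧) ω * (P⟦U ⁻¹' B | 𝓖⟧) ω ∂P := by
      rw [← setIntegral_indicator hUB, Set.indicator_indicator,
        Set.inter_comm (U ⁻¹' B) (W ⁻¹' s)]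
      rw [← setIntegral_condExp h𝓖 hIsB_int hG]
      exact setIntegral_congr_ae (h𝓖 G hG)
        ((hindep s B hs hB).mono fun ω hω _ => hω)
    -- RHS
    have hprod_int : Integrable
        (fun ω => (P⟦W ⁻¹' s | 𝓖⟧) ω * (U ⁻¹' B).indicator (fun _ => (1:ℝ)) ω) P := by
      have h1 : Integrable
          (fun ω => (U ⁻¹' B).indicator (fun _ => (1:ℝ)) ω * (P⟦W ⁻¹' s | 𝓖⟧) ω) P :=
        integrable_condExp.bdd_mul
          (hIB_int.aestronglyMeasurable) (Filter.Eventually.of_forall hIB_bdd)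
      simpa [mul_comm] using h1
    have hpull : P[(fun ω => (P⟦W ⁻¹' s | 𝓖⟧) ω * (U ⁻¹' B).indicator (fun _ => (1:ℝ)) ω) | 𝓖]
        =ᵐ[P] fun ω => (P⟦W ⁻¹' s | 𝓖⟧) ω * (P⟦U ⁻¹' B | 𝓖⟧) ω :=
      condExp_mul_of_stronglyMeasurable_left stronglyMeasurable_condExp hprod_int hIB_int
    have hRHS : ∫ ω in G ∩ U ⁻¹' B, (P⟦W ⁻¹' s | 𝓖⟧) ω ∂P
        = ∫ ω in G, (P⟦W ⁻¹' s | 𝓖⟧) ω * (P⟦U ⁻¹' B | 𝓖⟧) ω ∂P := by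
      rw [← setIntegral_indicator hUB]
      have heq : (U ⁻¹' B).indicator (P⟦W ⁻¹' s | 𝓖⟧)
          = fun ω => (P⟦W ⁻¹' s | 𝓖⟧) ω * (U ⁻¹' B).indicator (fun _ => (1:ℝ)) ω := by
        funext ω
        by_cases h : ω ∈ U ⁻¹' B <;> simp [h]
      rw [heq, ← setIntegral_condExp h𝓖 hprod_int hG]
      exact setIntegral_congr_ae (h𝓖 G hG) (hpull.mono fun ω hω _ => hω)
    rw [hLHS, hRHS]
  -- Step 1: extend the identity from indicators to `W` itself, by `Memℒp` induction
  -- over `σ(W)`-measurable functions.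
  have hcomapW : MeasurableSpace.comap W inferInstance ≤ mΩ := hW.comap_le
  have hfunc : ∀ G : Set Ω, MeasurableSet[𝓖] G → ∀ B : Set 𝓤, MeasurableSet B →
      ∫ ω in G ∩ U ⁻¹' B, W ω ∂P = ∫ ω in G ∩ U ⁻¹' B, (P[W | 𝓖]) ω ∂P := by
    set Cp : (Ω → ℝ) → Prop := fun f =>
      ∀ G : Set Ω, MeasurableSet[𝓖] G → ∀ B : Set 𝓤, MeasurableSet B →
        ∫ ω in G ∩ U ⁻¹' B, f ω ∂P = ∫ ω in G ∩ U ⁻¹' B, (P[f | 𝓖]) ω ∂P with hCp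
    have hmain : Cp W := by
      have hWm' : AEStronglyMeasurable[MeasurableSpace.comap W inferInstance] W P :=
        (Measurable.stronglyMeasurable
          (fun s hs => measurable_iff_comap_le.mpr le_rfl hs)).aestronglyMeasurable
      refine MemLp.induction_stronglyMeasurable hcomapW (p := 1) ENNReal.one_ne_top Cp
        ?_ ?_ ?_ ?_ (memLp_one_iff_integrable.mpr hWint) hWm'
      · -- indicators
        rintro c t ⟨s, hs, rfl⟩ -
        intro G hG B hB
        have hsmul : (W ⁻¹' s).indicator (fun _ => c)
            = c • (W ⁻¹' s).indicator (fun _ => (1:ℝ)) := by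
          funext ω
          by_cases h : ω ∈ W ⁻¹' s <;> simp [h]
        have hA : MeasurableSet[mΩ] (G ∩ U ⁻¹' B) := (h𝓖 G hG).inter (hU hB)
        have h1 : ∫ ω in G ∩ U ⁻¹' B, (c • (W ⁻¹' s).indicator (fun _ => (1:ℝ))) ω ∂P
            = c * ∫ ω in G ∩ U ⁻¹' B, (W ⁻¹' s).indicator (fun _ => (1:ℝ)) ω ∂P := by
          simp only [Pi.smul_apply, smul_eq_mul]
          exact integral_const_mul c _
        have h2 : ∫ ω in G ∩ U ⁻¹' B, (P[c • (W ⁻¹' s).indicator (fun _ => (1:ℝ)) | 𝓖]) ω ∂P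
            = c * ∫ ω in G ∩ U ⁻¹' B, (P⟦W ⁻¹' s | 𝓖⟧) ω ∂P := by
          rw [setIntegral_congr_ae hA
            (((condExp_smul (μ := P) (m := 𝓖) c ((W ⁻¹' s).indicator (fun _ => (1:ℝ)))) :
              _).mono fun ω hω _ => hω)]
          simp only [Pi.smul_apply, smul_eq_mul]
          exact integral_const_mul c _
        rw [hsmul, h1, h2, key s hs G hG B hB]
      · -- addition
        intro f g hdisj hf hg hfm hgm hPf hPg G hG B hB
        have hfint : Integrable f P := memLp_one_iff_integrable.mp hf
        have hgint : Integrable g P := memLp_one_iff_integrable.mp hg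
        have hA : MeasurableSet[mΩ] (G ∩ U ⁻¹' B) := (h𝓖 G hG).inter (hU hB)
        rw [integral_add' hfint.integrableOn hgint.integrableOn]
        rw [hPf G hG B hB, hPg G hG B hB]
        have hcsum : P[f + g | 𝓖] =ᵐ[P] P[f | 𝓖] + P[g | 𝓖] := condExp_add hfint hgint _
        rw [← integral_add' integrable_condExp.integrableOn integrable_condExp.integrableOn]
        exact (setIntegral_congr_ae hA (hcsum.mono fun ω hω _ => hω)).symm
      · -- closedness
        simp only [hCp, Set.setOf_forall]
        refine isClosed_iInter fun G => isClosed_iInter fun hG =>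
          isClosed_iInter fun B => isClosed_iInter fun hB => ?_
        have heq₁ : (fun f : lpMeas ℝ ℝ (MeasurableSpace.comap W inferInstance) 1 P =>
            ∫ ω in G ∩ U ⁻¹' B, (f : Ω → ℝ) ω ∂P)
            = (fun f : Lp ℝ 1 P => ∫ ω in G ∩ U ⁻¹' B, f ω ∂P) ∘
              (Submodule.subtypeL _) := by
          funext f; rfl
        have heq₂ : (fun f : lpMeas ℝ ℝ (MeasurableSpace.comap W inferInstance) 1 P =>
            ∫ ω in G ∩ U ⁻¹' B, (P[(f : Ω → ℝ) | 𝓖]) ω ∂P)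
            = (fun f : Lp ℝ 1 P => ∫ ω in G ∩ U ⁻¹' B, (condExpL1CLM ℝ h𝓖 P f) ω ∂P) ∘
              (Submodule.subtypeL _) := by
          funext f
          refine integral_congr_ae (Filter.EventuallyEq.restrict ?_)
          have hfint : Integrable (f : Ω → ℝ) P := L1.integrable_coeFn _
          have := condExp_ae_eq_condExpL1CLM h𝓖 hfint
          rwa [hfint.toL1_coeFn] at this
        refine isClosed_eq ?_ ?_
        · rw [heq₁]
          exact (continuous_setIntegral _).comp (ContinuousLinearMap.continuous _)
        · rw [heq₂]
          exact ((continuous_setIntegral _).comp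
            (condExpL1CLM ℝ h𝓖 P).continuous).comp (ContinuousLinearMap.continuous _)
      · -- a.e. congruence
        intro f g hfg hf hPf G hG B hB
        have hA : MeasurableSet[mΩ] (G ∩ U ⁻¹' B) := (h𝓖 G hG).inter (hU hB)
        have h1 : ∫ ω in G ∩ U ⁻¹' B, g ω ∂P = ∫ ω in G ∩ U ⁻¹' B, f ω ∂P :=
          setIntegral_congr_ae hA (hfg.mono fun ω hω _ => hω.symm)
        have h2 : P[f | 𝓖] =ᵐ[P] P[g | 𝓖] := condExp_congr_ae hfg
        rw [h1, hPf G hG B hB]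
        exact setIntegral_congr_ae hA (h2.mono fun ω hω _ => hω)
    exact hmain
  -- Step 2: extend from the π-system to all of `m₂` by Dynkin's lemma.
  have hWcond_int : Integrable (P[W | 𝓖]) P := integrable_condExp
  have hpi : IsPiSystem {A : Set Ω | ∃ G : Set Ω, MeasurableSet[𝓖] G ∧
      ∃ B : Set 𝓤, MeasurableSet B ∧ A = G ∩ U ⁻¹' B} := by
    rintro A₁ ⟨G₁, hG₁, B₁, hB₁, rfl⟩ A₂ ⟨G₂, hG₂, B₂, hB₂, rfl⟩ -
    refine ⟨G₁ ∩ G₂, hG₁.inter hG₂, B₁ ∩ B₂, hB₁.inter hB₂, ?_⟩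
    rw [Set.preimage_inter]
    ext ω; simp only [Set.mem_inter_iff]; tauto
  have hgen : 𝓖 ⊔ MeasurableSpace.comap U inferInstance = MeasurableSpace.generateFrom {A : Set Ω | ∃ G : Set Ω,
      MeasurableSet[𝓖] G ∧ ∃ B : Set 𝓤, MeasurableSet B ∧ A = G ∩ U ⁻¹' B} := by
    refine le_antisymm (sup_le ?_ ?_) (MeasurableSpace.generateFrom_le ?_)
    · intro G hG
      exact MeasurableSpace.measurableSet_generateFrom
        ⟨G, hG, Set.univ, MeasurableSet.univ, by simp⟩
    · rintro A ⟨B, hB, rfl⟩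
      exact MeasurableSpace.measurableSet_generateFrom
        ⟨Set.univ, MeasurableSet.univ, B, hB, by simp⟩
    · rintro A ⟨G, hG, B, hB, rfl⟩
      exact ((le_sup_left : 𝓖 ≤ 𝓖 ⊔ MeasurableSpace.comap U inferInstance) G hG).inter
        ((le_sup_right : MeasurableSpace.comap U inferInstance ≤ 𝓖 ⊔ MeasurableSpace.comap U inferInstance) (U ⁻¹' B) ⟨B, hB, rfl⟩)
  have hsets : ∀ A : Set Ω, MeasurableSet[𝓖 ⊔ MeasurableSpace.comap U inferInstance] A →
      ∫ ω in A, (P[W | 𝓖]) ω ∂P = ∫ ω in A, W ω ∂P := by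
    refine MeasurableSpace.induction_on_inter (m := 𝓖 ⊔ MeasurableSpace.comap U inferInstance) hgen hpi ?_ ?_ ?_ ?_
    · simp
    · rintro A ⟨G, hG, B, hB, rfl⟩
      exact (hfunc G hG B hB).symm
    · intro t ht h
      have htm : MeasurableSet[mΩ] t := hm₂ t ht
      have h1 := integral_add_compl htm hWcond_int
      have h2 := integral_add_compl htm hWint
      have h3 : ∫ ω, (P[W | 𝓖]) ω ∂P = ∫ ω, W ω ∂P := integral_condExp h𝓖
      linarith
    · intro f hdisj hfm h
      have hfm' : ∀ i, MeasurableSet[mΩ] (f i) := fun i => hm₂ _ (hfm i)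
      rw [integral_iUnion hfm' hdisj hWcond_int.integrableOn,
        integral_iUnion hfm' hdisj hWint.integrableOn]
      exact tsum_congr h
  exact (ae_eq_condExp_of_forall_setIntegral_eq hm₂ hWint
    (fun s _ _ => integrable_condExp.integrableOn)
    (fun s hs _ => hsets s hs)
    ((stronglyMeasurable_condExp (μ := P) (f := W) (m := 𝓖)).mono
      (le_sup_left : 𝓖 ≤ 𝓖 ⊔ MeasurableSpace.comap U inferInstance)).aestronglyMeasurable).symm
end

section
/- Sequential ignorability augmented by the latent substitute (structural form of Theorem 1): let H : Ω → 𝓗, ε : Ω → E, Z : Ω → 𝓩 and Y : Ω → ℝ be measurable random variables with values in standard Borel spaces, let k : 𝓗 × E → ℝ be measurable, and set W = k(H, ε). If ε is conditionally independent of the pair (Y, Z) given σ(H), then Y is conditionally independent of W given the σ-algebra σ(H) ⊔ σ(Z). -/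
open MeasureTheory ProbabilityTheory MeasurableSpace Set

namespace SeqIgnAux

variable {Ω : Type*} {m0 : MeasurableSpace Ω} {μ : Measure Ω}

/-! ### Rectangles generated by a pair of maps -/

def rect {α β : Type*} [MeasurableSpace α] [MeasurableSpace β] (f : Ω → α) (g : Ω → β) :
    Set (Set Ω) :=
  (fun s => (fun ω => (f ω, g ω)) ⁻¹' s) ''
    (image2 (· ×ˢ ·) {s : Set α | MeasurableSet s} {t : Set β | MeasurableSet t})

lemma comap_pair_eq {α β : Type*} [mα : MeasurableSpace α] [mβ : MeasurableSpace β]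
    (f : Ω → α) (g : Ω → β) :
    MeasurableSpace.comap (fun ω => (f ω, g ω)) inferInstance
      = MeasurableSpace.comap f mα ⊔ MeasurableSpace.comap g mβ := by
  have : (inferInstance : MeasurableSpace (α × β)) = mα.comap Prod.fst ⊔ mβ.comap Prod.snd := rfl
  rw [this, MeasurableSpace.comap_sup, MeasurableSpace.comap_comp, MeasurableSpace.comap_comp]
  rfl

lemma comap_pair_generateFrom {α β : Type*} [mα : MeasurableSpace α] [mβ : MeasurableSpace β]
    (f : Ω → α) (g : Ω → β) :
    MeasurableSpace.comap f mα ⊔ MeasurableSpace.comap g mβ = generateFrom (rect f g) := by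
  rw [← comap_pair_eq f g]
  have : (inferInstance : MeasurableSpace (α × β))
      = generateFrom (image2 (· ×ˢ ·) {s : Set α | MeasurableSet s}
          {t : Set β | MeasurableSet t}) :=
    generateFrom_prod.symm
  rw [this, MeasurableSpace.comap_generateFrom]
  rfl

lemma isPiSystem_rect {α β : Type*} [MeasurableSpace α] [MeasurableSpace β]
    (f : Ω → α) (g : Ω → β) : IsPiSystem (rect f g) :=
  IsPiSystem.comap isPiSystem_prod _

lemma mem_rect_iff {α β : Type*} [MeasurableSpace α] [MeasurableSpace β]
    {f : Ω → α} {g : Ω → β} {s : Set Ω} :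
    s ∈ rect f g ↔ ∃ a b, MeasurableSet a ∧ MeasurableSet b ∧ s = f ⁻¹' a ∩ g ⁻¹' b := by
  constructor
  · rintro ⟨-, ⟨a, ha, b, hb, rfl⟩, rfl⟩
    exact ⟨a, b, ha, hb, (Set.mk_preimage_prod f g).symm⟩
  · rintro ⟨a, b, ha, hb, rfl⟩
    exact ⟨a ×ˢ b, mem_image2_of_mem ha hb, Set.mk_preimage_prod f g⟩

/-! ### Agreement of set integrals via a generating π-system -/

lemma setIntegral_eq_on_generated [IsFiniteMeasure μ]
    {S : Set (Set Ω)} (hgen : MeasurableSpace.generateFrom S ≤ m0) (hpi : IsPiSystem S)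
    {f₁ f₂ : Ω → ℝ} (h₁ : Integrable f₁ μ) (h₂ : Integrable f₂ μ)
    (h₁n : 0 ≤ᵐ[μ] f₁) (h₂n : 0 ≤ᵐ[μ] f₂)
    (hS : ∀ s ∈ S, ∫ x in s, f₁ x ∂μ = ∫ x in s, f₂ x ∂μ)
    (huniv : ∫ x, f₁ x ∂μ = ∫ x, f₂ x ∂μ) :
    ∀ C, MeasurableSet[MeasurableSpace.generateFrom S] C →
      ∫ x in C, f₁ x ∂μ = ∫ x in C, f₂ x ∂μ := by
  have hval : ∀ (f : Ω → ℝ), Integrable f μ → 0 ≤ᵐ[μ] f → ∀ s : Set Ω, MeasurableSet s →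
      (μ.withDensity fun ω => ENNReal.ofReal (f ω)) s = ENNReal.ofReal (∫ x in s, f x ∂μ) := by
    intro f hf hfn s hs
    rw [withDensity_apply _ hs,
      ← ofReal_integral_eq_lintegral_ofReal hf.integrableOn (ae_restrict_of_ae hfn)]
  have hfin : ∀ (f : Ω → ℝ), Integrable f μ →
      IsFiniteMeasure (μ.withDensity fun ω => ENNReal.ofReal (f ω)) := by
    intro f hf
    constructor
    rw [withDensity_apply _ MeasurableSet.univ, Measure.restrict_univ]
    exact hf.lintegral_lt_top
  haveI i₁ := hfin f₁ h₁
  haveI i₂ := hfin f₂ h₂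
  have htrim : ((μ.withDensity fun ω => ENNReal.ofReal (f₁ ω)).trim hgen)
      = ((μ.withDensity fun ω => ENNReal.ofReal (f₂ ω)).trim hgen) := by
    haveI : IsFiniteMeasure ((μ.withDensity fun ω => ENNReal.ofReal (f₁ ω)).trim hgen) :=
      isFiniteMeasure_trim hgen
    refine ext_of_generate_finite S rfl hpi ?_ ?_
    · intro s hs
      rw [trim_measurableSet_eq hgen (measurableSet_generateFrom hs),
        trim_measurableSet_eq hgen (measurableSet_generateFrom hs),
        hval f₁ h₁ h₁n s (hgen s (measurableSet_generateFrom hs)),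
        hval f₂ h₂ h₂n s (hgen s (measurableSet_generateFrom hs)), hS s hs]
    · rw [trim_measurableSet_eq hgen MeasurableSet.univ,
        trim_measurableSet_eq hgen MeasurableSet.univ,
        hval f₁ h₁ h₁n _ MeasurableSet.univ, hval f₂ h₂ h₂n _ MeasurableSet.univ]
      simp only [Measure.restrict_univ]
      rw [huniv]
  intro C hC
  have h2 : ((μ.withDensity fun ω => ENNReal.ofReal (f₁ ω)) C)
      = ((μ.withDensity fun ω => ENNReal.ofReal (f₂ ω)) C) := by
    rw [← trim_measurableSet_eq hgen hC, ← trim_measurableSet_eq hgen hC, htrim]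
  rw [hval f₁ h₁ h₁n C (hgen C hC), hval f₂ h₂ h₂n C (hgen C hC)] at h2
  rw [ENNReal.ofReal_eq_ofReal_iff
    (setIntegral_nonneg_ae (hgen C hC) (h₁n.mono fun x hx _ => hx))
    (setIntegral_nonneg_ae (hgen C hC) (h₂n.mono fun x hx _ => hx))] at h2
  exact h2

/-! ### Indicator utilities -/

noncomputable def ind (s : Set Ω) : Ω → ℝ := s.indicator fun _ => (1 : ℝ)

lemma ind_nonneg (s : Set Ω) : 0 ≤ᵐ[μ] ind s :=
  Filter.Eventually.of_forall fun x => Set.indicator_nonneg (fun _ _ => zero_le_one) x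

lemma ind_le_one (s : Set Ω) : ind s ≤ fun _ => (1 : ℝ) := by
  intro x
  by_cases h : x ∈ s <;> simp [ind, Set.indicator, h]

lemma ind_bound (s : Set Ω) : ∀ᵐ x ∂μ, ‖ind s x‖ ≤ 1 := by
  refine Filter.Eventually.of_forall fun x => ?_
  by_cases h : x ∈ s <;> simp [ind, Set.indicator, h]

lemma ind_integrable [IsFiniteMeasure μ] {s : Set Ω} (hs : MeasurableSet[m0] s) :
    Integrable (ind s) μ := (integrable_const (1 : ℝ)).indicator hs

lemma indicator_eq_ind_mul (s : Set Ω) (f : Ω → ℝ) :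
    s.indicator f = fun x => ind s x * f x := by
  ext x
  by_cases h : x ∈ s <;> simp [ind, Set.indicator, h]

lemma ind_inter (s t : Set Ω) : ind (s ∩ t) = fun x => ind s x * ind t x := by
  rw [ind, ← Set.indicator_indicator, indicator_eq_ind_mul]
  rfl

lemma ind_aestronglyMeasurable {s : Set Ω} (hs : MeasurableSet[m0] s) :
    AEStronglyMeasurable (ind s) μ :=
  (stronglyMeasurable_one.indicator hs).aestronglyMeasurable

lemma setIntegral_eq_integral_ind_mul {C : Set Ω} (hC : MeasurableSet[m0] C) (f : Ω → ℝ) :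
    ∫ x in C, f x ∂μ = ∫ x, ind C x * f x ∂μ := by
  rw [← integral_indicator hC, indicator_eq_ind_mul]

lemma setIntegral_ind {C : Set Ω} (hC : MeasurableSet[m0] C) (D : Set Ω) :
    ∫ x in C, ind D x ∂μ = ∫ x, ind (C ∩ D) x ∂μ := by
  rw [setIntegral_eq_integral_ind_mul hC, ind_inter]

lemma setIntegral_ind_swap {C D : Set Ω} (hC : MeasurableSet[m0] C) (hD : MeasurableSet[m0] D) :
    ∫ x in C, ind D x ∂μ = ∫ x in D, ind C x ∂μ := by
  rw [setIntegral_ind hC, setIntegral_ind hD, Set.inter_comm]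

lemma condexp_ind_bound [IsFiniteMeasure μ] {m : MeasurableSpace Ω} (hm : m ≤ m0)
    {s : Set Ω} (hs : MeasurableSet[m0] s) : ∀ᵐ x ∂μ, ‖(μ[ind s|m]) x‖ ≤ 1 := by
  haveI : SigmaFinite (μ.trim hm) := (isFiniteMeasure_trim hm).toSigmaFinite
  have h0 : 0 ≤ᵐ[μ] μ[ind s|m] := condExp_nonneg (ind_nonneg s)
  have h1 : μ[ind s|m] ≤ᵐ[μ] μ[(fun _ => (1:ℝ))|m] :=
    condExp_mono (ind_integrable hs) (integrable_const 1)
      (Filter.Eventually.of_forall (ind_le_one s))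
  have h2 : μ[(fun _ => (1:ℝ))|m] = fun _ => (1:ℝ) := condExp_const hm 1
  rw [h2] at h1
  filter_upwards [h0, h1] with x hx0 hx1
  have hx0' : (0:ℝ) ≤ (μ[ind s|m]) x := by simpa using hx0
  rw [Real.norm_eq_abs, abs_le]
  exact ⟨by linarith, hx1⟩

lemma integral_mul_ind_eq_mul_condexp [IsFiniteMeasure μ] {m : MeasurableSpace Ω} (hm : m ≤ m0)
    {f : Ω → ℝ} (hfm : StronglyMeasurable[m] f) {c : ℝ} (hfb : ∀ᵐ x ∂μ, ‖f x‖ ≤ c)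
    {s : Set Ω} (hs : MeasurableSet[m0] s) :
    ∫ x, f x * ind s x ∂μ = ∫ x, f x * (μ[ind s|m]) x ∂μ := by
  haveI : SigmaFinite (μ.trim hm) := (isFiniteMeasure_trim hm).toSigmaFinite
  have hint1 : Integrable (fun x => f x * ind s x) μ :=
    (ind_integrable hs).bdd_mul (hfm.mono hm).aestronglyMeasurable hfb
  have hint1' : Integrable (f * ind s) μ := hint1
  have hpull : μ[f * ind s|m] =ᵐ[μ] f * μ[ind s|m] :=
    condExp_mul_of_stronglyMeasurable_left hfm hint1' (ind_integrable hs)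
  calc ∫ x, f x * ind s x ∂μ = ∫ x, (μ[f * ind s|m]) x ∂μ := (integral_condExp hm).symm
    _ = ∫ x, (f * μ[ind s|m]) x ∂μ := integral_congr_ae hpull
    _ = ∫ x, f x * (μ[ind s|m]) x ∂μ := rfl

lemma setIntegral_condexp_ind [IsFiniteMeasure μ] {m : MeasurableSpace Ω} (hm : m ≤ m0)
    {C D : Set Ω} (hC : MeasurableSet[m0] C) (hD : MeasurableSet[m0] D) :
    ∫ x in C, (μ[ind D|m]) x ∂μ = ∫ x, (μ[ind C|m]) x * (μ[ind D|m]) x ∂μ := by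
  haveI : SigmaFinite (μ.trim hm) := (isFiniteMeasure_trim hm).toSigmaFinite
  rw [setIntegral_eq_integral_ind_mul hC]
  have h1 : ∫ x, ind C x * (μ[ind D|m]) x ∂μ = ∫ x, (μ[ind D|m]) x * ind C x ∂μ :=
    integral_congr_ae (Filter.Eventually.of_forall fun x => mul_comm _ _)
  have h2 := integral_mul_ind_eq_mul_condexp hm (f := μ[ind D|m])
    stronglyMeasurable_condExp (condexp_ind_bound hm hD) hC
  rw [h1, h2]
  exact integral_congr_ae (Filter.Eventually.of_forall fun x => mul_comm _ _)

lemma setIntegral_condexp_ind_symm [IsFiniteMeasure μ] {m : MeasurableSpace Ω} (hm : m ≤ m0)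
    {C D : Set Ω} (hC : MeasurableSet[m0] C) (hD : MeasurableSet[m0] D) :
    ∫ x in C, (μ[ind D|m]) x ∂μ = ∫ x in D, (μ[ind C|m]) x ∂μ := by
  rw [setIntegral_condexp_ind hm hC hD, setIntegral_condexp_ind hm hD hC]
  exact integral_congr_ae (Filter.Eventually.of_forall fun x => mul_comm _ _)

end SeqIgnAux

open SeqIgnAux

/-- **Sequential ignorability augmented by the latent substitute** (structural form of
Theorem 1): if the treatment `W = k(H, ε)` is a randomized function of the context history
`H`, and the randomization noise `ε` is conditionally independent of the pair `(Y, Z)`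
given `σ(H)`, then `Y` is conditionally independent of `W` given `σ(H) ⊔ σ(Z)`. -/
theorem sequential_ignorability_augmented
    {Ω : Type*} [MeasurableSpace Ω] [StandardBorelSpace Ω]
    {𝓗 E 𝓩 : Type*}
    [MeasurableSpace 𝓗] [StandardBorelSpace 𝓗]
    [MeasurableSpace E] [StandardBorelSpace E]
    [MeasurableSpace 𝓩] [StandardBorelSpace 𝓩]
    (P : Measure Ω) [IsProbabilityMeasure P]
    (H : Ω → 𝓗) (ε : Ω → E) (Z : Ω → 𝓩) (Y W : Ω → ℝ)
    (hH : Measurable H) (hε : Measurable ε) (hZ : Measurable Z) (hY : Measurable Y)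
    (k : 𝓗 × E → ℝ) (hk : Measurable k)
    (hWdef : ∀ ω, W ω = k (H ω, ε ω))
    (hindep : CondIndepFun (MeasurableSpace.comap H inferInstance) hH.comap_le
      ε (fun ω => (Y ω, Z ω)) P) :
    CondIndepFun
      (MeasurableSpace.comap H inferInstance ⊔ MeasurableSpace.comap Z inferInstance)
      (sup_le hH.comap_le hZ.comap_le) Y W P := by
  rename_i mΩ sΩ m𝓗 s𝓗 mE sE m𝓩 s𝓩 pP
  -- notation
  set 𝒢 := MeasurableSpace.comap H inferInstance with h𝒢def
  set 𝔪 := 𝒢 ⊔ MeasurableSpace.comap Z inferInstance with h𝔪def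
  set ℋ := 𝔪 ⊔ MeasurableSpace.comap Y inferInstance with hℋdef
  set ξ : Ω → ℝ × 𝓩 := fun ω => (Y ω, Z ω) with hξdef
  letI mtop : MeasurableSpace Ω := mΩ
  have hξm : Measurable ξ := hY.prodMk hZ
  have h𝒢 : 𝒢 ≤ mΩ := hH.comap_le
  have h𝔪 : 𝔪 ≤ mΩ := sup_le hH.comap_le hZ.comap_le
  have hℋ : ℋ ≤ mΩ := sup_le h𝔪 hY.comap_le
  have hmD : 𝒢 ⊔ MeasurableSpace.comap ε inferInstance ≤ mΩ :=
    sup_le hH.comap_le hε.comap_le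
  haveI : SigmaFinite (P.trim h𝒢) := (isFiniteMeasure_trim h𝒢).toSigmaFinite
  haveI : SigmaFinite (P.trim h𝔪) := (isFiniteMeasure_trim h𝔪).toSigmaFinite
  haveI : SigmaFinite (P.trim hℋ) := (isFiniteMeasure_trim hℋ).toSigmaFinite
  have hWm : Measurable W := by
    have : W = fun ω => k (H ω, ε ω) := funext hWdef
    rw [this]; exact hk.comp (hH.prodMk hε)
  -- conditional independence hypothesis in condexp form
  have hindep' : ∀ u v, MeasurableSet u → MeasurableSet v →
      (P[ind (ε ⁻¹' u ∩ ξ ⁻¹' v)|𝒢]) =ᵐ[P]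
        fun ω => (P[ind (ε ⁻¹' u)|𝒢]) ω * (P[ind (ξ ⁻¹' v)|𝒢]) ω := by
    intro u v hu hv
    exact (condIndepFun_iff_condExp_inter_preimage_eq_mul hε hξm).mp hindep u v hu hv
  -- `CORE`: basic computation on rectangles
  have CORE : ∀ (a : Set 𝓗) (u : Set E) (v : Set (ℝ × 𝓩)), MeasurableSet a → MeasurableSet u →
      MeasurableSet v →
      ∫ x in (H ⁻¹' a ∩ ξ ⁻¹' v), ind (ε ⁻¹' u) x ∂P
        = ∫ x, ind (H ⁻¹' a) x * ((P[ind (ε ⁻¹' u)|𝒢]) x * (P[ind (ξ ⁻¹' v)|𝒢]) x) ∂P := by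
    intro a u v ha hu hv
    have hCm : MeasurableSet (H ⁻¹' a ∩ ξ ⁻¹' v) := (hH ha).inter (hξm hv)
    have hset : (H ⁻¹' a ∩ ξ ⁻¹' v) ∩ ε ⁻¹' u = H ⁻¹' a ∩ (ε ⁻¹' u ∩ ξ ⁻¹' v) := by
      rw [Set.inter_assoc, Set.inter_comm (ξ ⁻¹' v) (ε ⁻¹' u)]
    rw [setIntegral_ind hCm, hset, ← setIntegral_ind (hH ha)]
    rw [← setIntegral_condExp h𝒢 (ind_integrable ((hε hu).inter (hξm hv)))
      (⟨a, ha, rfl⟩ : MeasurableSet[𝒢] (H ⁻¹' a))]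
    rw [setIntegral_congr_ae (hH ha) ((hindep' u v hu hv).mono fun x hx _ => hx)]
    rw [setIntegral_eq_integral_ind_mul (hH ha)]
  have CORE2 : ∀ (a : Set 𝓗) (u : Set E) (v : Set (ℝ × 𝓩)), MeasurableSet a → MeasurableSet u →
      MeasurableSet v →
      ∫ x in (H ⁻¹' a ∩ ξ ⁻¹' v), (P[ind (ε ⁻¹' u)|𝒢]) x ∂P
        = ∫ x, ind (H ⁻¹' a) x * ((P[ind (ε ⁻¹' u)|𝒢]) x * (P[ind (ξ ⁻¹' v)|𝒢]) x) ∂P := by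
    intro a u v ha hu hv
    have hCm : MeasurableSet (H ⁻¹' a ∩ ξ ⁻¹' v) := (hH ha).inter (hξm hv)
    have hfm : StronglyMeasurable[𝒢] (fun x => ind (H ⁻¹' a) x * (P[ind (ε ⁻¹' u)|𝒢]) x) :=
      ((@stronglyMeasurable_one Ω ℝ 𝒢 _ _).indicator
        (⟨a, ha, rfl⟩ : MeasurableSet[𝒢] (H ⁻¹' a))).mul stronglyMeasurable_condExp
    have hfb : ∀ᵐ x ∂P, ‖ind (H ⁻¹' a) x * (P[ind (ε ⁻¹' u)|𝒢]) x‖ ≤ 1 := by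
      filter_upwards [ind_bound (μ := P) (H ⁻¹' a), condexp_ind_bound h𝒢 (hε hu)] with x h1 h2
      rw [norm_mul]
      exact mul_le_one₀ h1 (norm_nonneg _) h2
    calc ∫ x in (H ⁻¹' a ∩ ξ ⁻¹' v), (P[ind (ε ⁻¹' u)|𝒢]) x ∂P
        = ∫ x, ind (H ⁻¹' a ∩ ξ ⁻¹' v) x * (P[ind (ε ⁻¹' u)|𝒢]) x ∂P :=
          setIntegral_eq_integral_ind_mul hCm _
      _ = ∫ x, (fun y => ind (H ⁻¹' a) y * (P[ind (ε ⁻¹' u)|𝒢]) y) x * ind (ξ ⁻¹' v) x ∂P := by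
          rw [ind_inter]
          exact integral_congr_ae (Filter.Eventually.of_forall fun x => by ring)
      _ = ∫ x, (fun y => ind (H ⁻¹' a) y * (P[ind (ε ⁻¹' u)|𝒢]) y) x * (P[ind (ξ ⁻¹' v)|𝒢]) x ∂P :=
          integral_mul_ind_eq_mul_condexp h𝒢 hfm hfb (hξm hv)
      _ = ∫ x, ind (H ⁻¹' a) x * ((P[ind (ε ⁻¹' u)|𝒢]) x * (P[ind (ξ ⁻¹' v)|𝒢]) x) ∂P :=
          integral_congr_ae (Filter.Eventually.of_forall fun x => by ring)
  -- Step A : `E[1_{ε⁻¹ u} | 𝔪] = E[1_{ε⁻¹ u} | 𝒢]`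
  have StepA : ∀ u : Set E, MeasurableSet u →
      (P[ind (ε ⁻¹' u)|𝔪]) =ᵐ[P] (P[ind (ε ⁻¹' u)|𝒢]) := by
    intro u hu
    have hgen : MeasurableSpace.generateFrom (rect H Z) ≤ mΩ := by
      rw [← comap_pair_generateFrom H Z]; exact h𝔪
    have key : ∀ s, MeasurableSet[𝔪] s →
        ∫ x in s, (P[ind (ε ⁻¹' u)|𝒢]) x ∂P = ∫ x in s, ind (ε ⁻¹' u) x ∂P := by
      have h := setIntegral_eq_on_generated (μ := P) hgen (isPiSystem_rect H Z)
        (integrable_condExp (f := ind (ε ⁻¹' u))) (ind_integrable (hε hu))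
        (condExp_nonneg (ind_nonneg _)) (ind_nonneg _) ?_ (integral_condExp h𝒢)
      · intro s hs
        exact h s (by rwa [← comap_pair_generateFrom H Z])
      · rintro s hs
        obtain ⟨a, z, ha, hz, rfl⟩ := mem_rect_iff.mp hs
        have hZv : Z ⁻¹' z = ξ ⁻¹' (Set.univ ×ˢ z) := by
          rw [hξdef]; ext x; simp [Set.mem_prod]
        rw [hZv, CORE2 a u (Set.univ ×ˢ z) ha hu (MeasurableSet.univ.prod hz),
          CORE a u (Set.univ ×ˢ z) ha hu (MeasurableSet.univ.prod hz)]
    exact (ae_eq_condExp_of_forall_setIntegral_eq h𝔪 (ind_integrable (hε hu))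
      (fun s _ _ => integrable_condExp.integrableOn)
      (fun s hs _ => key s hs)
      ((stronglyMeasurable_condExp.mono (le_sup_left : 𝒢 ≤ 𝔪)).aestronglyMeasurable)).symm
  -- Base case of step 5 : rectangles C (for ℋ) and D (for 𝒢 ⊔ σ(ε))
  have Base2 : ∀ (a : Set 𝓗) (v : Set (ℝ × 𝓩)) (b : Set 𝓗) (u : Set E),
      MeasurableSet a → MeasurableSet v → MeasurableSet b → MeasurableSet u →
      ∫ x in (H ⁻¹' b ∩ ε ⁻¹' u), ind (H ⁻¹' a ∩ ξ ⁻¹' v) x ∂P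
        = ∫ x in (H ⁻¹' a ∩ ξ ⁻¹' v), (P[ind (H ⁻¹' b ∩ ε ⁻¹' u)|𝔪]) x ∂P := by
    intro a v b u ha hv hb hu
    have hC : MeasurableSet (H ⁻¹' a ∩ ξ ⁻¹' v) := (hH ha).inter (hξm hv)
    have hD : MeasurableSet (H ⁻¹' b ∩ ε ⁻¹' u) := (hH hb).inter (hε hu)
    -- LHS
    have hsetL : (H ⁻¹' b ∩ ε ⁻¹' u) ∩ (H ⁻¹' a ∩ ξ ⁻¹' v)
        = (H ⁻¹' (a ∩ b) ∩ ξ ⁻¹' v) ∩ ε ⁻¹' u := by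
      ext x; simp only [Set.mem_inter_iff, Set.mem_preimage, Set.mem_inter_iff]; tauto
    have hL : ∫ x in (H ⁻¹' b ∩ ε ⁻¹' u), ind (H ⁻¹' a ∩ ξ ⁻¹' v) x ∂P
        = ∫ x, ind (H ⁻¹' (a ∩ b)) x *
            ((P[ind (ε ⁻¹' u)|𝒢]) x * (P[ind (ξ ⁻¹' v)|𝒢]) x) ∂P := by
      rw [setIntegral_ind hD, hsetL, ← setIntegral_ind ((hH (ha.inter hb)).inter (hξm hv)),
        CORE (a ∩ b) u v (ha.inter hb) hu hv]
    -- RHS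
    have hcondD : (P[ind (H ⁻¹' b ∩ ε ⁻¹' u)|𝔪]) =ᵐ[P]
        (H ⁻¹' b).indicator (P[ind (ε ⁻¹' u)|𝒢]) := by
      have hbm : MeasurableSet[𝔪] (H ⁻¹' b) :=
        (le_sup_left : 𝒢 ≤ 𝔪) _ (⟨b, hb, rfl⟩ : MeasurableSet[𝒢] (H ⁻¹' b))
      have h1 : ind (H ⁻¹' b ∩ ε ⁻¹' u) = (H ⁻¹' b).indicator (ind (ε ⁻¹' u)) := by
        rw [ind, ← Set.indicator_indicator]; rfl
      have h2 : (P[ind (H ⁻¹' b ∩ ε ⁻¹' u)|𝔪]) =ᵐ[P]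
          (H ⁻¹' b).indicator (P[ind (ε ⁻¹' u)|𝔪]) := by
        rw [h1]
        exact condExp_indicator (ind_integrable (hε hu)) hbm
      refine h2.trans ?_
      filter_upwards [StepA u hu] with x hx
      by_cases hxb : x ∈ H ⁻¹' b <;> simp [Set.indicator, hxb, hx]
    have hR : ∫ x in (H ⁻¹' a ∩ ξ ⁻¹' v), (P[ind (H ⁻¹' b ∩ ε ⁻¹' u)|𝔪]) x ∂P
        = ∫ x, ind (H ⁻¹' (a ∩ b)) x *
            ((P[ind (ε ⁻¹' u)|𝒢]) x * (P[ind (ξ ⁻¹' v)|𝒢]) x) ∂P := by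
      rw [setIntegral_congr_ae hC (hcondD.mono fun x hx _ => hx)]
      have hsetR : (H ⁻¹' a ∩ ξ ⁻¹' v) ∩ H ⁻¹' b = H ⁻¹' (a ∩ b) ∩ ξ ⁻¹' v := by
        ext x; simp only [Set.mem_inter_iff, Set.mem_preimage, Set.mem_inter_iff]; tauto
      calc ∫ x in (H ⁻¹' a ∩ ξ ⁻¹' v), (H ⁻¹' b).indicator (P[ind (ε ⁻¹' u)|𝒢]) x ∂P
          = ∫ x, ind (H ⁻¹' a ∩ ξ ⁻¹' v) x *
              (ind (H ⁻¹' b) x * (P[ind (ε ⁻¹' u)|𝒢]) x) ∂P := by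
            rw [setIntegral_eq_integral_ind_mul hC, indicator_eq_ind_mul]
        _ = ∫ x, ind ((H ⁻¹' a ∩ ξ ⁻¹' v) ∩ H ⁻¹' b) x * (P[ind (ε ⁻¹' u)|𝒢]) x ∂P := by
            rw [ind_inter (H ⁻¹' a ∩ ξ ⁻¹' v) (H ⁻¹' b)]
            exact integral_congr_ae (Filter.Eventually.of_forall fun x => by ring)
        _ = ∫ x in (H ⁻¹' (a ∩ b) ∩ ξ ⁻¹' v), (P[ind (ε ⁻¹' u)|𝒢]) x ∂P := by
            rw [hsetR, ← setIntegral_eq_integral_ind_mul ((hH (ha.inter hb)).inter (hξm hv))]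
        _ = ∫ x, ind (H ⁻¹' (a ∩ b)) x *
              ((P[ind (ε ⁻¹' u)|𝒢]) x * (P[ind (ξ ⁻¹' v)|𝒢]) x) ∂P :=
            CORE2 (a ∩ b) u v (ha.inter hb) hu hv
    rw [hL, hR]
  -- Step 5 : for rectangle C, all D in 𝒢 ⊔ σ(ε)
  have Step5 : ∀ (a : Set 𝓗) (v : Set (ℝ × 𝓩)), MeasurableSet a → MeasurableSet v →
      ∀ D, MeasurableSet[𝒢 ⊔ MeasurableSpace.comap ε inferInstance] D →
      ∫ x in D, ind (H ⁻¹' a ∩ ξ ⁻¹' v) x ∂P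
        = ∫ x in D, (P[ind (H ⁻¹' a ∩ ξ ⁻¹' v)|𝔪]) x ∂P := by
    intro a v ha hv
    have hC : MeasurableSet (H ⁻¹' a ∩ ξ ⁻¹' v) := (hH ha).inter (hξm hv)
    have hgen : MeasurableSpace.generateFrom (rect H ε) ≤ mΩ := by
      rw [← comap_pair_generateFrom H ε]; exact hmD
    have h := setIntegral_eq_on_generated (μ := P) hgen (isPiSystem_rect H ε)
      (ind_integrable hC) (integrable_condExp (f := ind (H ⁻¹' a ∩ ξ ⁻¹' v)))
      (ind_nonneg _) (condExp_nonneg (ind_nonneg _)) ?_ (integral_condExp h𝔪).symm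
    · intro D hD
      exact h D (by rwa [← comap_pair_generateFrom H ε])
    · rintro s hs
      obtain ⟨b, u, hb, hu, rfl⟩ := mem_rect_iff.mp hs
      have hD : MeasurableSet (H ⁻¹' b ∩ ε ⁻¹' u) := (hH hb).inter (hε hu)
      rw [Base2 a v b u ha hv hb hu, setIntegral_condexp_ind_symm h𝔪 hC hD]
  -- Step 6 : for all D in 𝒢 ⊔ σ(ε), all C in ℋ
  have Step6 : ∀ D, MeasurableSet[𝒢 ⊔ MeasurableSpace.comap ε inferInstance] D →
      ∀ C, MeasurableSet[ℋ] C →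
      ∫ x in C, (P[ind D|𝔪]) x ∂P = ∫ x in C, ind D x ∂P := by
    intro D hD
    have hD0 : MeasurableSet D := hmD D hD
    have hgen : MeasurableSpace.generateFrom (rect H ξ) ≤ mΩ := by
      rw [← comap_pair_generateFrom H ξ]
      exact sup_le hH.comap_le hξm.comap_le
    have hℋeq : ℋ = MeasurableSpace.generateFrom (rect H ξ) := by
      rw [← comap_pair_generateFrom H ξ, hℋdef, h𝔪def, hξdef, comap_pair_eq Y Z,
        sup_assoc, sup_comm (MeasurableSpace.comap Z inferInstance)
          (MeasurableSpace.comap Y inferInstance)]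
    have h := setIntegral_eq_on_generated (μ := P) hgen (isPiSystem_rect H ξ)
      (integrable_condExp (f := ind D)) (ind_integrable hD0)
      (condExp_nonneg (ind_nonneg _)) (ind_nonneg _) ?_ (integral_condExp h𝔪)
    · intro C hC
      exact h C (by rwa [← hℋeq])
    · rintro s hs
      obtain ⟨a, v, ha, hv, rfl⟩ := mem_rect_iff.mp hs
      have hC : MeasurableSet (H ⁻¹' a ∩ ξ ⁻¹' v) := (hH ha).inter (hξm hv)
      calc ∫ x in (H ⁻¹' a ∩ ξ ⁻¹' v), (P[ind D|𝔪]) x ∂P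
          = ∫ x in D, (P[ind (H ⁻¹' a ∩ ξ ⁻¹' v)|𝔪]) x ∂P :=
            setIntegral_condexp_ind_symm h𝔪 hC hD0
        _ = ∫ x in D, ind (H ⁻¹' a ∩ ξ ⁻¹' v) x ∂P := (Step5 a v ha hv D hD).symm
        _ = ∫ x in (H ⁻¹' a ∩ ξ ⁻¹' v), ind D x ∂P := setIntegral_ind_swap hD0 hC
  -- Step 7 : key lemma
  have KL : ∀ D, MeasurableSet[𝒢 ⊔ MeasurableSpace.comap ε inferInstance] D →
      (P[ind D|𝔪]) =ᵐ[P] (P[ind D|ℋ]) := by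
    intro D hD
    exact ae_eq_condExp_of_forall_setIntegral_eq hℋ (ind_integrable (hmD D hD))
      (fun s _ _ => integrable_condExp.integrableOn)
      (fun s hs _ => Step6 D hD s hs)
      ((stronglyMeasurable_condExp.mono (le_sup_left : 𝔪 ≤ ℋ)).aestronglyMeasurable)
  -- final assembly
  rw [condIndepFun_iff_condExp_inter_preimage_eq_mul hY hWm]
  intro s t hs ht
  have hB : MeasurableSet[𝒢 ⊔ MeasurableSpace.comap ε inferInstance] (W ⁻¹' t) := by
    rw [← comap_pair_eq H ε]
    refine ⟨k ⁻¹' t, hk ht, ?_⟩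
    ext x
    simp [hWdef x]
  have hB0 : MeasurableSet (W ⁻¹' t) := hWm ht
  have hA : MeasurableSet[ℋ] (Y ⁻¹' s) :=
    (le_sup_right : MeasurableSpace.comap Y inferInstance ≤ ℋ) _ ⟨s, hs, rfl⟩
  have hA0 : MeasurableSet (Y ⁻¹' s) := hY hs
  have step1 : (P[ind (Y ⁻¹' s ∩ W ⁻¹' t)|𝔪]) =ᵐ[P]
      (P[(P[ind (Y ⁻¹' s ∩ W ⁻¹' t)|ℋ])|𝔪]) :=
    (condExp_condExp_of_le (le_sup_left : 𝔪 ≤ ℋ) hℋ).symm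
  have step2 : (P[ind (Y ⁻¹' s ∩ W ⁻¹' t)|ℋ]) =ᵐ[P]
      (Y ⁻¹' s).indicator (P[ind (W ⁻¹' t)|𝔪]) := by
    have h1 : ind (Y ⁻¹' s ∩ W ⁻¹' t) = (Y ⁻¹' s).indicator (ind (W ⁻¹' t)) := by
      rw [ind, ← Set.indicator_indicator]; rfl
    have h2 : (P[ind (Y ⁻¹' s ∩ W ⁻¹' t)|ℋ]) =ᵐ[P]
        (Y ⁻¹' s).indicator (P[ind (W ⁻¹' t)|ℋ]) := by
      rw [h1]
      exact condExp_indicator (ind_integrable hB0) hA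
    refine h2.trans ?_
    filter_upwards [KL (W ⁻¹' t) hB] with x hx
    by_cases hxs : x ∈ Y ⁻¹' s <;> simp [Set.indicator, hxs, hx]
  have step3 : (P[(Y ⁻¹' s).indicator (P[ind (W ⁻¹' t)|𝔪])|𝔪]) =ᵐ[P]
      fun x => (P[ind (W ⁻¹' t)|𝔪]) x * (P[ind (Y ⁻¹' s)|𝔪]) x := by
    have h1 : (Y ⁻¹' s).indicator (P[ind (W ⁻¹' t)|𝔪])
        = (P[ind (W ⁻¹' t)|𝔪]) * ind (Y ⁻¹' s) := by
      rw [indicator_eq_ind_mul]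
      exact funext fun x => mul_comm _ _
    rw [h1]
    have hint : Integrable ((P[ind (W ⁻¹' t)|𝔪]) * ind (Y ⁻¹' s)) P := by
      have := (ind_integrable (μ := P) hA0).bdd_mul
        (stronglyMeasurable_condExp.mono h𝔪).aestronglyMeasurable
        (condexp_ind_bound h𝔪 hB0)
      exact this
    exact condExp_mul_of_stronglyMeasurable_left stronglyMeasurable_condExp hint (ind_integrable hA0)
  calc (P[ind (Y ⁻¹' s ∩ W ⁻¹' t)|𝔪])
      =ᵐ[P] (P[(P[ind (Y ⁻¹' s ∩ W ⁻¹' t)|ℋ])|𝔪]) := step1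
    _ =ᵐ[P] (P[(Y ⁻¹' s).indicator (P[ind (W ⁻¹' t)|𝔪])|𝔪]) := condExp_congr_ae step2
    _ =ᵐ[P] fun x => (P[ind (W ⁻¹' t)|𝔪]) x * (P[ind (Y ⁻¹' s)|𝔪]) x := step3
    _ =ᵐ[P] fun x => (P[ind (Y ⁻¹' s)|𝔪]) x * (P[ind (W ⁻¹' t)|𝔪]) x :=
        Filter.Eventually.of_forall fun x => mul_comm _ _
end

section
/- Identifiability of the CATE augmented with the learned substitute (Corollary to Theorem 1): let W = k(H, ε) for a measurable k, and suppose ε is conditionally independent of the triple (Y₀, Y₁, Z) given σ(H), consistency holds (Y = W·Y₁ + (1−W)·Y₀), and overlap holds for the augmented σ-algebra 𝓖' = σ(H) ⊔ σ(Z), i.e. 0 < E[W | 𝓖'] < 1 almost surely. Then almost surely E[Y₁ − Y₀ | 𝓖'] = E[W·Y | 𝓖'] / E[W | 𝓖'] − E[(1−W)·Y | 𝓖'] / E[(1−W) | 𝓖']. -/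
open MeasureTheory ProbabilityTheory
open scoped NNReal ENNReal

theorem cate_aux_setIntegral_pair_ext {Ω α β : Type*} [MeasurableSpace Ω]
    [MeasurableSpace α] [MeasurableSpace β]
    {μ : Measure Ω} [IsFiniteMeasure μ] {X : Ω → α} {Y : Ω → β}
    (hX : Measurable X) (hY : Measurable Y) {F G : Ω → ℝ}
    (hF : Integrable F μ) (hG : Integrable G μ)
    (hbase : ∀ a b, MeasurableSet a → MeasurableSet b →
      ∫ ω in X ⁻¹' a ∩ Y ⁻¹' b, F ω ∂μ = ∫ ω in X ⁻¹' a ∩ Y ⁻¹' b, G ω ∂μ) :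
    ∀ v, MeasurableSet v → ∫ ω in (fun ω => (X ω, Y ω)) ⁻¹' v, F ω ∂μ
      = ∫ ω in (fun ω => (X ω, Y ω)) ⁻¹' v, G ω ∂μ := by
  have hp : Measurable fun ω => (X ω, Y ω) := hX.prodMk hY
  have huniv : ∫ ω, F ω ∂μ = ∫ ω, G ω ∂μ := by
    have := hbase Set.univ Set.univ MeasurableSet.univ MeasurableSet.univ
    simpa using this
  refine MeasurableSpace.induction_on_inter generateFrom_prod.symm isPiSystem_prod ?_ ?_ ?_ ?_
  · simp
  · rintro t ⟨a, ha, b, hb, rfl⟩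
    rw [Set.mk_preimage_prod]
    exact hbase a b ha hb
  · intro t ht hind
    have h1 := integral_add_compl (hp ht) hF
    have h2 := integral_add_compl (hp ht) hG
    have hpre : (fun ω => (X ω, Y ω)) ⁻¹' tᶜ = ((fun ω => (X ω, Y ω)) ⁻¹' t)ᶜ := rfl
    rw [hpre]
    linarith
  · intro f hdisj hmeas hind
    have hpre : (fun ω => (X ω, Y ω)) ⁻¹' (⋃ i, f i) = ⋃ i, (fun ω => (X ω, Y ω)) ⁻¹' (f i) := by
      simp [Set.preimage_iUnion]
    rw [hpre, integral_iUnion (fun i => hp (hmeas i))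
        (fun i j hij => (hdisj hij).preimage _) hF.integrableOn,
      integral_iUnion (fun i => hp (hmeas i))
        (fun i j hij => (hdisj hij).preimage _) hG.integrableOn]
    exact tsum_congr hind

theorem cate_aux_master
    {Ω 𝓗 E Γ : Type*} (m' : MeasurableSpace Ω) [mΩ : MeasurableSpace Ω] [StandardBorelSpace Ω]
    [MeasurableSpace 𝓗] [MeasurableSpace E] [MeasurableSpace Γ]
    (P : Measure Ω) [IsProbabilityMeasure P]
    {H : Ω → 𝓗} {ε : Ω → E} {T : Ω → Γ}
    (hH : Measurable H) (hε : Measurable ε) (hT : Measurable T)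
    (hm'eq : m' = MeasurableSpace.comap H inferInstance)
    (hm' : m' ≤ mΩ)
    (hindep : CondIndepFun m' hm' ε T P)
    {V : Ω → ℝ} (hV : Measurable V) (hVvals : ∀ ω, V ω = 0 ∨ V ω = 1)
    {k : 𝓗 × E → ℝ} (hk : Measurable k) (hVdef : ∀ ω, V ω = k (H ω, ε ω))
    {e' : Ω → ℝ} (he'sm : StronglyMeasurable[m'] e')
    (he'01 : ∀ ω, 0 ≤ e' ω ∧ e' ω ≤ 1)
    (he'ae : e' =ᵐ[P] P[V | m'])
    {g : Γ → ℝ} (hg : Measurable g) (hgint : Integrable (fun ω => g (T ω)) P)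
    {a₀ : Set 𝓗} (ha₀ : MeasurableSet a₀) :
    ∫ ω in H ⁻¹' a₀, V ω * g (T ω) ∂P = ∫ ω in H ⁻¹' a₀, e' ω * g (T ω) ∂P := by
  haveI : SigmaFinite (P.trim hm') := inferInstance
  classical
  have hVint : Integrable V P := by
    refine (integrable_const (1:ℝ)).mono' hV.aestronglyMeasurable (ae_of_all _ fun ω => ?_)
    rcases hVvals ω with h | h <;> simp [h]
  have hindint : ∀ {s : Set Ω}, MeasurableSet s → Integrable (s.indicator fun _ => (1:ℝ)) P :=
    fun {s} hs => (integrable_const (1:ℝ)).indicator hs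
  -- pull-out helper
  have hpull : ∀ (φ ψ : Ω → ℝ), StronglyMeasurable[m'] φ → (∀ ω, ‖φ ω‖ ≤ 1) →
      Integrable ψ P → ∫ ω, φ ω * (P[ψ|m']) ω ∂P = ∫ ω, φ ω * ψ ω ∂P := by
    intro φ ψ hφ hφb hψ
    have hmul : Integrable (φ * ψ) P := hψ.bdd_mul (hφ.mono hm').aestronglyMeasurable (c := 1) (ae_of_all _ hφb)
    have h := condExp_mul_of_stronglyMeasurable_left (m := m') hφ hmul hψ
    calc ∫ ω, φ ω * (P[ψ|m']) ω ∂P = ∫ ω, (φ * P[ψ|m']) ω ∂P := rfl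
      _ = ∫ ω, (P[φ * ψ|m']) ω ∂P := (integral_congr_ae h).symm
      _ = ∫ ω, (φ * ψ) ω ∂P := integral_condExp hm'
      _ = ∫ ω, φ ω * ψ ω ∂P := rfl
  -- truncation helpers
  have htr_sm : ∀ (f : Ω → ℝ), StronglyMeasurable[m'] f →
      StronglyMeasurable[m'] (fun ω => max 0 (min (f ω) 1)) := fun f hf =>
    (measurable_const.max (hf.measurable.min measurable_const)).stronglyMeasurable
  have htr_ae : ∀ (ψ : Ω → ℝ), (∀ ω, 0 ≤ ψ ω) → (∀ ω, ψ ω ≤ 1) → Integrable ψ P →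
      (fun ω => max 0 (min ((P[ψ|m']) ω) 1)) =ᵐ[P] P[ψ|m'] := by
    intro ψ h0 h1 hint
    have hge : 0 ≤ᵐ[P] P[ψ|m'] := condExp_nonneg (ae_of_all _ h0)
    have hle : P[ψ|m'] ≤ᵐ[P] fun _ => (1:ℝ) := by
      have h := condExp_mono (m := m') hint (integrable_const (1:ℝ)) (ae_of_all _ h1)
      have hc : P[(fun _ => (1:ℝ))|m'] = fun _ => (1:ℝ) := condExp_const hm' 1
      rwa [hc] at h
    filter_upwards [hge, hle] with ω hω0 hω1
    have h0 : (0:ℝ) ≤ (P[ψ|m']) ω := hω0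
    have h1 : (P[ψ|m']) ω ≤ 1 := hω1
    rw [min_eq_left h1, max_eq_right h0]
  have htr_bd : ∀ (x : ℝ), ‖max 0 (min x 1)‖ ≤ 1 := by
    intro x
    rw [Real.norm_eq_abs, abs_of_nonneg (le_max_left _ _)]
    exact max_le zero_le_one (min_le_right _ _)
  -- the set representing V
  have hpair : Measurable fun ω => (H ω, ε ω) := hH.prodMk hε
  set SV : Set Ω := (fun ω => (H ω, ε ω)) ⁻¹' (k ⁻¹' {1}) with hSVdef
  have hSVm : MeasurableSet SV := hpair (hk (measurableSet_singleton 1))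
  have hVind : ∀ ω, SV.indicator (fun _ => (1:ℝ)) ω = V ω := by
    intro ω
    rcases hVvals ω with h | h
    · rw [h, Set.indicator_of_notMem]
      intro hmem
      have h1 : k (H ω, ε ω) = 1 := hmem
      rw [← hVdef ω, h] at h1
      norm_num at h1
    · rw [h, Set.indicator_of_mem]
      show k (H ω, ε ω) ∈ ({1} : Set ℝ)
      rw [← hVdef ω, h]
      rfl
  have hcond := (condIndepFun_iff_condExp_inter_preimage_eq_mul (hm' := hm') hε hT).mp hindep
  -- Step A
  have stepA : ∀ t : Set Γ, MeasurableSet t → ∀ a : Set 𝓗, MeasurableSet a →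
      ∫ ω in SV ∩ H ⁻¹' a, (T ⁻¹' t).indicator (fun _ => (1:ℝ)) ω ∂P
        = ∫ ω in SV ∩ H ⁻¹' a,
            max 0 (min ((P[(T ⁻¹' t).indicator (fun _ => (1:ℝ))|m']) ω) 1) ∂P := by
    intro t ht a ha
    have hB : MeasurableSet (T ⁻¹' t) := hT ht
    set qB : Ω → ℝ := P[(T ⁻¹' t).indicator (fun _ => (1:ℝ))|m'] with hqBdef
    set qB' : Ω → ℝ := fun ω => max 0 (min (qB ω) 1) with hqB'def
    have hqB'sm : StronglyMeasurable[m'] qB' := htr_sm _ stronglyMeasurable_condExp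
    have hqB'ae : qB' =ᵐ[P] qB := htr_ae _
      (fun ω => Set.indicator_nonneg (fun _ _ => zero_le_one) ω)
      (fun ω => by by_cases h : ω ∈ T ⁻¹' t <;> simp [h]) (hindint hB)
    have hqB'int : Integrable qB' P :=
      (integrable_const (1:ℝ)).mono' (hqB'sm.mono hm').aestronglyMeasurable
        (ae_of_all _ fun ω => htr_bd _)
    have hbase : ∀ a' s, MeasurableSet a' → MeasurableSet s →
        ∫ ω in H ⁻¹' a' ∩ ε ⁻¹' s, (T ⁻¹' t).indicator (fun _ => (1:ℝ)) ω ∂P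
          = ∫ ω in H ⁻¹' a' ∩ ε ⁻¹' s, qB' ω ∂P := by
      intro a' s ha' hs
      have hεs : MeasurableSet (ε ⁻¹' s) := hε hs
      have hHa' : MeasurableSet[m'] (H ⁻¹' a') := by rw [hm'eq]; exact ⟨a', ha', rfl⟩
      have hHa'0 : MeasurableSet (H ⁻¹' a') := hm' _ hHa'
      have hφsm : StronglyMeasurable[m'] fun ω =>
          (H ⁻¹' a').indicator (fun _ => (1:ℝ)) ω * qB' ω :=
        (stronglyMeasurable_const.indicator hHa').mul hqB'sm
      have hφb : ∀ ω, ‖(H ⁻¹' a').indicator (fun _ => (1:ℝ)) ω * qB' ω‖ ≤ 1 := by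
        intro ω
        by_cases h : ω ∈ H ⁻¹' a'
        · rw [Set.indicator_of_mem h, one_mul]; exact htr_bd _
        · rw [Set.indicator_of_notMem h, zero_mul]; simp
      calc ∫ ω in H ⁻¹' a' ∩ ε ⁻¹' s, (T ⁻¹' t).indicator (fun _ => (1:ℝ)) ω ∂P
          = ∫ ω in H ⁻¹' a', (ε ⁻¹' s).indicator ((T ⁻¹' t).indicator (fun _ => (1:ℝ))) ω ∂P :=
            (setIntegral_indicator hεs).symm
        _ = ∫ ω in H ⁻¹' a', (ε ⁻¹' s ∩ T ⁻¹' t).indicator (fun _ => (1:ℝ)) ω ∂P := by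
            rw [Set.indicator_indicator]
        _ = ∫ ω in H ⁻¹' a', (P⟦ε ⁻¹' s ∩ T ⁻¹' t|m'⟧) ω ∂P :=
            (setIntegral_condExp hm' (hindint (hεs.inter hB)) hHa').symm
        _ = ∫ ω in H ⁻¹' a', (P⟦ε ⁻¹' s|m'⟧) ω * qB ω ∂P := by
            refine setIntegral_congr_ae hHa'0 ?_
            filter_upwards [hcond s t hs ht] with ω hω _ using hω
        _ = ∫ ω in H ⁻¹' a', (P⟦ε ⁻¹' s|m'⟧) ω * qB' ω ∂P := by
            refine setIntegral_congr_ae hHa'0 ?_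
            filter_upwards [hqB'ae] with ω hω _
            rw [hω]
        _ = ∫ ω, ((H ⁻¹' a').indicator (fun _ => (1:ℝ)) ω * qB' ω) * (P⟦ε ⁻¹' s|m'⟧) ω ∂P := by
            rw [← integral_indicator hHa'0]
            congr 1
            funext ω
            by_cases h : ω ∈ H ⁻¹' a'
            · simp only [Set.indicator_of_mem h]; ring
            · simp only [Set.indicator_of_notMem h]; ring
        _ = ∫ ω, ((H ⁻¹' a').indicator (fun _ => (1:ℝ)) ω * qB' ω)
              * (ε ⁻¹' s).indicator (fun _ => (1:ℝ)) ω ∂P :=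
            hpull _ _ hφsm hφb (hindint hεs)
        _ = ∫ ω in H ⁻¹' a' ∩ ε ⁻¹' s, qB' ω ∂P := by
            rw [← integral_indicator (hHa'0.inter hεs)]
            congr 1
            funext ω
            by_cases h1 : ω ∈ H ⁻¹' a' <;> by_cases h2 : ω ∈ ε ⁻¹' s <;>
              simp [Set.indicator_of_mem, Set.indicator_of_notMem, h1, h2,
                Set.mem_inter_iff]
    have hext := cate_aux_setIntegral_pair_ext hH hε (hindint hB) hqB'int hbase
    have hv : MeasurableSet ((k ⁻¹' {1}) ∩ a ×ˢ (Set.univ : Set E)) :=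
      (hk (measurableSet_singleton 1)).inter (ha.prod MeasurableSet.univ)
    have hpre : (fun ω => (H ω, ε ω)) ⁻¹' ((k ⁻¹' {1}) ∩ a ×ˢ (Set.univ : Set E))
        = SV ∩ H ⁻¹' a := by
      rw [Set.preimage_inter, Set.mk_preimage_prod]
      simp [hSVdef]
    have h := hext _ hv
    rw [hpre] at h
    exact h
  have hA0m : MeasurableSet (H ⁻¹' a₀) := hH ha₀
  have hA0m' : MeasurableSet[m'] (H ⁻¹' a₀) := by rw [hm'eq]; exact ⟨a₀, ha₀, rfl⟩
  have he'b : ∀ ω, ‖e' ω‖ ≤ 1 := fun ω => by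
    rw [Real.norm_eq_abs, abs_of_nonneg (he'01 ω).1]; exact (he'01 ω).2
  have he'int : Integrable e' P :=
    (integrable_const (1:ℝ)).mono' ((he'sm.mono hm').aestronglyMeasurable) (ae_of_all _ he'b)
  have hρ₂int : Integrable ((H ⁻¹' a₀).indicator e') P := he'int.indicator hA0m
  have hρ₁int : Integrable ((SV ∩ H ⁻¹' a₀).indicator fun _ => (1:ℝ)) P :=
    hindint (hSVm.inter hA0m)
  have hL1 : ∀ t : Set Γ, MeasurableSet t →
      ∫ ω in T ⁻¹' t, (SV ∩ H ⁻¹' a₀).indicator (fun _ => (1:ℝ)) ω ∂P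
        = ∫ ω in T ⁻¹' t, (H ⁻¹' a₀).indicator e' ω ∂P := by
    intro t ht
    have hB : MeasurableSet (T ⁻¹' t) := hT ht
    set qB : Ω → ℝ := P[(T ⁻¹' t).indicator (fun _ => (1:ℝ))|m'] with hqBdef
    set qB' : Ω → ℝ := fun ω => max 0 (min (qB ω) 1) with hqB'def
    have hqB'sm : StronglyMeasurable[m'] qB' := htr_sm _ stronglyMeasurable_condExp
    have hqB'ae : qB' =ᵐ[P] qB := htr_ae _
      (fun ω => Set.indicator_nonneg (fun _ _ => zero_le_one) ω)
      (fun ω => by by_cases h : ω ∈ T ⁻¹' t <;> simp [h]) (hindint hB)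
    have hAq_sm : StronglyMeasurable[m'] ((H ⁻¹' a₀).indicator qB') :=
      hqB'sm.indicator hA0m'
    have hAq_b : ∀ ω, ‖(H ⁻¹' a₀).indicator qB' ω‖ ≤ 1 := fun ω => by
      by_cases h : ω ∈ H ⁻¹' a₀
      · rw [Set.indicator_of_mem h]; exact htr_bd _
      · rw [Set.indicator_of_notMem h]; simp
    have hAe_sm : StronglyMeasurable[m'] ((H ⁻¹' a₀).indicator e') :=
      he'sm.indicator hA0m'
    have hAe_b : ∀ ω, ‖(H ⁻¹' a₀).indicator e' ω‖ ≤ 1 := fun ω => by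
      by_cases h : ω ∈ H ⁻¹' a₀
      · rw [Set.indicator_of_mem h]; exact he'b ω
      · rw [Set.indicator_of_notMem h]; simp
    have lhs_eq : ∫ ω in T ⁻¹' t, (SV ∩ H ⁻¹' a₀).indicator (fun _ => (1:ℝ)) ω ∂P
        = ∫ ω, (H ⁻¹' a₀).indicator qB' ω * e' ω ∂P := by
      calc ∫ ω in T ⁻¹' t, (SV ∩ H ⁻¹' a₀).indicator (fun _ => (1:ℝ)) ω ∂P
          = ∫ ω in SV ∩ H ⁻¹' a₀, (T ⁻¹' t).indicator (fun _ => (1:ℝ)) ω ∂P := by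
            rw [← integral_indicator hB, ← integral_indicator (hSVm.inter hA0m)]
            congr 1
            funext ω
            by_cases h1 : ω ∈ T ⁻¹' t <;> by_cases h2 : ω ∈ SV ∩ H ⁻¹' a₀ <;>
              simp [Set.indicator_of_mem, Set.indicator_of_notMem, h1, h2]
        _ = ∫ ω in SV ∩ H ⁻¹' a₀, qB' ω ∂P := stepA t ht a₀ ha₀
        _ = ∫ ω, ((H ⁻¹' a₀).indicator qB' ω) * V ω ∂P := by
            rw [← integral_indicator (hSVm.inter hA0m)]
            congr 1
            funext ω
            by_cases h1 : ω ∈ SV <;> by_cases h2 : ω ∈ H ⁻¹' a₀ <;>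
              simp [Set.indicator_of_mem, Set.indicator_of_notMem, h1, h2,
                Set.mem_inter_iff, ← hVind ω]
        _ = ∫ ω, ((H ⁻¹' a₀).indicator qB' ω) * (P[V|m']) ω ∂P :=
            (hpull _ _ hAq_sm hAq_b hVint).symm
        _ = ∫ ω, (H ⁻¹' a₀).indicator qB' ω * e' ω ∂P := by
            refine integral_congr_ae ?_
            filter_upwards [he'ae] with ω hω
            rw [hω]
    have rhs_eq : ∫ ω in T ⁻¹' t, (H ⁻¹' a₀).indicator e' ω ∂P
        = ∫ ω, (H ⁻¹' a₀).indicator e' ω * qB' ω ∂P := by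
      calc ∫ ω in T ⁻¹' t, (H ⁻¹' a₀).indicator e' ω ∂P
          = ∫ ω, ((H ⁻¹' a₀).indicator e' ω) * (T ⁻¹' t).indicator (fun _ => (1:ℝ)) ω ∂P := by
            rw [← integral_indicator hB]
            congr 1
            funext ω
            by_cases h : ω ∈ T ⁻¹' t <;>
              simp [Set.indicator_of_mem, Set.indicator_of_notMem, h]
        _ = ∫ ω, ((H ⁻¹' a₀).indicator e' ω) * qB ω ∂P :=
            (hpull _ _ hAe_sm hAe_b (hindint hB)).symm
        _ = ∫ ω, (H ⁻¹' a₀).indicator e' ω * qB' ω ∂P := by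
            refine integral_congr_ae ?_
            filter_upwards [hqB'ae] with ω hω
            rw [hω]
    rw [lhs_eq, rhs_eq]
    congr 1
    funext ω
    rcases Classical.em (ω ∈ H ⁻¹' a₀) with h | h
    · rw [Set.indicator_of_mem h, Set.indicator_of_mem h]; ring
    · rw [Set.indicator_of_notMem h, Set.indicator_of_notMem h, zero_mul, zero_mul]
  -- Step B: the two pushforward measures agree
  have hρ₁m : Measurable ((SV ∩ H ⁻¹' a₀).indicator fun _ => (1:ℝ)) :=
    measurable_const.indicator (hSVm.inter hA0m)
  have hρ₂m : Measurable ((H ⁻¹' a₀).indicator e') :=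
    ((he'sm.mono hm').measurable).indicator hA0m
  have hρ₁0 : ∀ ω, 0 ≤ (SV ∩ H ⁻¹' a₀).indicator (fun _ => (1:ℝ)) ω :=
    fun ω => Set.indicator_nonneg (fun _ _ => zero_le_one) ω
  have hρ₂0 : ∀ ω, 0 ≤ (H ⁻¹' a₀).indicator e' ω :=
    fun ω => Set.indicator_nonneg (fun ω _ => (he'01 ω).1) ω
  have hν : (P.withDensity fun ω =>
        ENNReal.ofReal ((SV ∩ H ⁻¹' a₀).indicator (fun _ => (1:ℝ)) ω)).map T
      = (P.withDensity fun ω => ENNReal.ofReal ((H ⁻¹' a₀).indicator e' ω)).map T := by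
    refine Measure.ext fun t ht => ?_
    rw [Measure.map_apply hT ht, Measure.map_apply hT ht,
      withDensity_apply _ (hT ht), withDensity_apply _ (hT ht),
      ← ofReal_integral_eq_lintegral_ofReal hρ₁int.integrableOn (ae_of_all _ hρ₁0),
      ← ofReal_integral_eq_lintegral_ofReal hρ₂int.integrableOn (ae_of_all _ hρ₂0),
      hL1 t ht]
  have key : ∀ (ρ : Ω → ℝ), Measurable ρ → (∀ ω, 0 ≤ ρ ω) →
      ∫ p, g p ∂((P.withDensity fun ω => ENNReal.ofReal (ρ ω)).map T)
        = ∫ ω, ρ ω * g (T ω) ∂P := by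
    intro ρ hρ hρ0
    rw [integral_map hT.aemeasurable hg.aestronglyMeasurable]
    have hco : (fun ω => ENNReal.ofReal (ρ ω))
        = fun ω => ((Real.toNNReal (ρ ω) : ℝ≥0) : ℝ≥0∞) := rfl
    rw [hco, integral_withDensity_eq_integral_smul hρ.real_toNNReal (fun ω => g (T ω))]
    congr 1
    funext ω
    rw [NNReal.smul_def, smul_eq_mul, Real.coe_toNNReal _ (hρ0 ω)]
  calc ∫ ω in H ⁻¹' a₀, V ω * g (T ω) ∂P
      = ∫ ω, (SV ∩ H ⁻¹' a₀).indicator (fun _ => (1:ℝ)) ω * g (T ω) ∂P := by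
        rw [← integral_indicator hA0m]
        congr 1
        funext ω
        by_cases h1 : ω ∈ SV <;> by_cases h2 : ω ∈ H ⁻¹' a₀ <;>
          simp [Set.indicator_of_mem, Set.indicator_of_notMem, h1, h2,
            Set.mem_inter_iff, ← hVind ω]
    _ = ∫ p, g p ∂((P.withDensity fun ω =>
          ENNReal.ofReal ((SV ∩ H ⁻¹' a₀).indicator (fun _ => (1:ℝ)) ω)).map T) :=
        (key _ hρ₁m hρ₁0).symm
    _ = ∫ p, g p ∂((P.withDensity fun ω =>
          ENNReal.ofReal ((H ⁻¹' a₀).indicator e' ω)).map T) := by rw [hν]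
    _ = ∫ ω, (H ⁻¹' a₀).indicator e' ω * g (T ω) ∂P := key _ hρ₂m hρ₂0
    _ = ∫ ω in H ⁻¹' a₀, e' ω * g (T ω) ∂P := by
        rw [← integral_indicator hA0m]
        congr 1
        funext ω
        by_cases h : ω ∈ H ⁻¹' a₀ <;>
          simp [Set.indicator_of_mem, Set.indicator_of_notMem, h]

theorem cate_aux_trunc_ae {Ω : Type*} (m' : MeasurableSpace Ω) [mΩ : MeasurableSpace Ω]
    (hm' : m' ≤ mΩ) (P : Measure Ω) [IsProbabilityMeasure P]
    {ψ : Ω → ℝ} (h0 : ∀ ω, 0 ≤ ψ ω) (h1 : ∀ ω, ψ ω ≤ 1) (hint : Integrable ψ P) :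
    (fun ω => max 0 (min ((P[ψ|m']) ω) 1)) =ᵐ[P] P[ψ|m'] := by
  haveI : SigmaFinite (P.trim hm') := inferInstance
  have hge : 0 ≤ᵐ[P] P[ψ|m'] := condExp_nonneg (ae_of_all _ h0)
  have hle : P[ψ|m'] ≤ᵐ[P] fun _ => (1:ℝ) := by
    have h := condExp_mono (m := m') hint (integrable_const (1:ℝ)) (ae_of_all _ h1)
    have hc : P[(fun _ => (1:ℝ))|m'] = fun _ => (1:ℝ) := condExp_const hm' 1
    rwa [hc] at h
  filter_upwards [hge, hle] with ω hω0 hω1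
  have h0' : (0:ℝ) ≤ (P[ψ|m']) ω := hω0
  have h1' : (P[ψ|m']) ω ≤ 1 := hω1
  rw [min_eq_left h1', max_eq_right h0']

theorem cate_main_aux
    {Ω 𝓗 E 𝓩 : Type*} (𝓖' : MeasurableSpace Ω)
    {mΩ : MeasurableSpace Ω} [StandardBorelSpace Ω]
    [MeasurableSpace 𝓗] [StandardBorelSpace 𝓗]
    [MeasurableSpace E] [StandardBorelSpace E]
    [MeasurableSpace 𝓩] [StandardBorelSpace 𝓩]
    (P : Measure Ω) [IsProbabilityMeasure P]
    (Y₀ Y₁ W Y : Ω → ℝ) (H : Ω → 𝓗) (ε : Ω → E) (Z : Ω → 𝓩)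
    (hY₀ : Measurable Y₀) (hY₁ : Measurable Y₁)
    (hW : Measurable W) (hH : Measurable H) (hε : Measurable ε) (hZ : Measurable Z)
    (hY₀int : Integrable Y₀ P) (hY₁int : Integrable Y₁ P)
    (hWvals : ∀ ω, W ω = 0 ∨ W ω = 1)
    (k : 𝓗 × E → ℝ) (hk : Measurable k)
    (hWdef : ∀ ω, W ω = k (H ω, ε ω))
    (hindep : CondIndepFun (MeasurableSpace.comap H inferInstance) hH.comap_le
      ε (fun ω => (Y₀ ω, Y₁ ω, Z ω)) P)
    (hconsistency : ∀ ω, Y ω = W ω * Y₁ ω + (1 - W ω) * Y₀ ω)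
    (h𝓖' : 𝓖' = MeasurableSpace.comap H inferInstance ⊔ MeasurableSpace.comap Z inferInstance)
    (hoverlap : ∀ᵐ ω ∂P, 0 < (P[W | 𝓖']) ω ∧ (P[W | 𝓖']) ω < 1) :
    ∀ᵐ ω ∂P,
      (P[fun ω => Y₁ ω - Y₀ ω | 𝓖']) ω =
        (P[fun ω => W ω * Y ω | 𝓖']) ω / (P[W | 𝓖']) ω
        - (P[fun ω => (1 - W ω) * Y ω | 𝓖']) ω / (P[fun ω => 1 - W ω | 𝓖']) ω := by
  classical
  have hmG : 𝓖' ≤ mΩ := by rw [h𝓖']; exact sup_le hH.comap_le hZ.comap_le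
  haveI : SigmaFinite (P.trim hmG) := inferInstance
  have hm'le : MeasurableSpace.comap H inferInstance ≤ mΩ := hH.comap_le
  haveI : SigmaFinite (P.trim hm'le) := inferInstance
  have hm'G : MeasurableSpace.comap H inferInstance ≤ 𝓖' := by rw [h𝓖']; exact le_sup_left
  have hT : Measurable fun ω => (Y₀ ω, Y₁ ω, Z ω) := hY₀.prodMk (hY₁.prodMk hZ)
  -- W is in [0,1]
  have hWb : ∀ ω, ‖W ω‖ ≤ 1 := fun ω => by rcases hWvals ω with h | h <;> simp [h]
  have hW0 : ∀ ω, 0 ≤ W ω := fun ω => by rcases hWvals ω with h | h <;> simp [h]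
  have hW1 : ∀ ω, W ω ≤ 1 := fun ω => by rcases hWvals ω with h | h <;> simp [h]
  have hWint : Integrable W P :=
    (integrable_const (1:ℝ)).mono' hW.aestronglyMeasurable (ae_of_all _ hWb)
  -- the second treatment function
  have hV₂ : Measurable fun ω => 1 - W ω := measurable_const.sub hW
  have hV₂vals : ∀ ω, (1:ℝ) - W ω = 0 ∨ (1:ℝ) - W ω = 1 := fun ω => by
    rcases hWvals ω with h | h <;> simp [h]
  have hV₂int : Integrable (fun ω => 1 - W ω) P := (integrable_const (1:ℝ)).sub hWint
  -- truncated propensities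
  set e' : Ω → ℝ := fun ω => max 0 (min ((P[W|MeasurableSpace.comap H inferInstance]) ω) 1)
    with he'def
  set f' : Ω → ℝ :=
    fun ω => max 0 (min ((P[(fun ω => 1 - W ω)|MeasurableSpace.comap H inferInstance]) ω) 1)
    with hf'def
  have he'sm : StronglyMeasurable[MeasurableSpace.comap H inferInstance] e' :=
    (measurable_const.max (stronglyMeasurable_condExp.measurable.min
      measurable_const)).stronglyMeasurable
  have hf'sm : StronglyMeasurable[MeasurableSpace.comap H inferInstance] f' :=
    (measurable_const.max (stronglyMeasurable_condExp.measurable.min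
      measurable_const)).stronglyMeasurable
  have he'01 : ∀ ω, 0 ≤ e' ω ∧ e' ω ≤ 1 := fun ω =>
    ⟨le_max_left _ _, max_le zero_le_one (min_le_right _ _)⟩
  have hf'01 : ∀ ω, 0 ≤ f' ω ∧ f' ω ≤ 1 := fun ω =>
    ⟨le_max_left _ _, max_le zero_le_one (min_le_right _ _)⟩
  have he'ae : e' =ᵐ[P] P[W|MeasurableSpace.comap H inferInstance] :=
    cate_aux_trunc_ae _ hm'le P hW0 hW1 hWint
  have hf'ae : f' =ᵐ[P] P[(fun ω => 1 - W ω)|MeasurableSpace.comap H inferInstance] :=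
    cate_aux_trunc_ae _ hm'le P (fun ω => by rcases hWvals ω with h | h <;> simp [h])
      (fun ω => by rcases hWvals ω with h | h <;> simp [h]) hV₂int
  have he'b : ∀ ω, ‖e' ω‖ ≤ 1 := fun ω => by
    rw [Real.norm_eq_abs, abs_of_nonneg (he'01 ω).1]; exact (he'01 ω).2
  have hf'b : ∀ ω, ‖f' ω‖ ≤ 1 := fun ω => by
    rw [Real.norm_eq_abs, abs_of_nonneg (hf'01 ω).1]; exact (hf'01 ω).2
  have he'int : Integrable e' P :=
    (integrable_const (1:ℝ)).mono' ((he'sm.mono hm'le).aestronglyMeasurable) (ae_of_all _ he'b)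
  have hf'int : Integrable f' P :=
    (integrable_const (1:ℝ)).mono' ((hf'sm.mono hm'le).aestronglyMeasurable) (ae_of_all _ hf'b)
  -- relation between f' and e'
  have hf'rel : f' =ᵐ[P] fun ω => 1 - e' ω := by
    have hsub := condExp_sub (m := MeasurableSpace.comap H inferInstance)
      (integrable_const (1:ℝ)) hWint
    have hc : P[(fun _ => (1:ℝ))|MeasurableSpace.comap H inferInstance] = fun _ => (1:ℝ) :=
      condExp_const hm'le 1
    have heq : ((fun _ => (1:ℝ)) - W) = fun ω => 1 - W ω := rfl
    rw [heq, hc] at hsub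
    filter_upwards [hf'ae, hsub, he'ae] with ω h1 h2 h3
    rw [h1, h2]
    simp only [Pi.sub_apply]
    rw [← h3]
  -- 𝓖' as a comap of the pair
  have h𝓖'comap : 𝓖' = MeasurableSpace.comap (fun ω => (H ω, Z ω)) inferInstance := by
    rw [h𝓖']
    have hprod : (inferInstance : MeasurableSpace (𝓗 × 𝓩)) =
        MeasurableSpace.comap Prod.fst inferInstance ⊔
          MeasurableSpace.comap Prod.snd inferInstance := rfl
    rw [hprod, MeasurableSpace.comap_sup, MeasurableSpace.comap_comp,
      MeasurableSpace.comap_comp]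
    rfl
  -- reduce 𝓖'-set integrals to rectangles
  have hGsets : ∀ (F G : Ω → ℝ), Integrable F P → Integrable G P →
      (∀ a c, MeasurableSet a → MeasurableSet c →
        ∫ ω in H ⁻¹' a ∩ Z ⁻¹' c, F ω ∂P = ∫ ω in H ⁻¹' a ∩ Z ⁻¹' c, G ω ∂P) →
      ∀ s, MeasurableSet[𝓖'] s → ∫ ω in s, F ω ∂P = ∫ ω in s, G ω ∂P := by
    intro F G hF hG hbase s hs
    rw [h𝓖'comap] at hs
    obtain ⟨v, hv, rfl⟩ := MeasurableSpace.measurableSet_comap.mp hs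
    exact cate_aux_setIntegral_pair_ext hH hZ hF hG hbase v hv
  -- helper to move a Z-rectangle indicator into the integrand
  have hmove : ∀ (F : Ω → ℝ) (a : Set 𝓗) (c : Set 𝓩), MeasurableSet a → MeasurableSet c →
      ∫ ω in H ⁻¹' a ∩ Z ⁻¹' c, F ω ∂P
        = ∫ ω in H ⁻¹' a, F ω * Set.indicator c (fun _ => (1:ℝ)) (Z ω) ∂P := by
    intro F a c ha hc
    rw [← integral_indicator ((hH ha).inter (hZ hc)), ← integral_indicator (hH ha)]
    congr 1
    funext ω
    rcases Classical.em (ω ∈ H ⁻¹' a) with h1 | h1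
    · rcases Classical.em (ω ∈ Z ⁻¹' c) with h2 | h2
      · have h2' : Z ω ∈ c := h2
        rw [Set.indicator_of_mem (Set.mem_inter h1 h2), Set.indicator_of_mem h1,
          Set.indicator_of_mem h2', mul_one]
      · have h2' : Z ω ∉ c := h2
        rw [Set.indicator_of_notMem (fun hm => h2 (Set.mem_of_mem_inter_right hm)),
          Set.indicator_of_mem h1, Set.indicator_of_notMem h2', mul_zero]
    · rw [Set.indicator_of_notMem (fun hm => h1 (Set.mem_of_mem_inter_left hm)),
        Set.indicator_of_notMem h1]
  have hindc : ∀ (c : Set 𝓩), MeasurableSet c →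
      Integrable (fun ω => Set.indicator c (fun _ => (1:ℝ)) (Z ω)) P := fun c hc =>
    (integrable_const (1:ℝ)).mono'
      ((measurable_const.indicator hc).comp hZ).aestronglyMeasurable
      (ae_of_all _ fun ω => by by_cases h : Z ω ∈ c <;> simp [h])
  have hgcm : ∀ (c : Set 𝓩), MeasurableSet c →
      Measurable fun p : ℝ × ℝ × 𝓩 => Set.indicator c (fun _ => (1:ℝ)) p.2.2 := fun c hc =>
    (measurable_const.indicator hc).comp (measurable_snd.comp measurable_snd)
  -- Claim 1 : P[W|𝓖'] = e'
  have hbase1 : ∀ a c, MeasurableSet a → MeasurableSet c →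
      ∫ ω in H ⁻¹' a ∩ Z ⁻¹' c, e' ω ∂P = ∫ ω in H ⁻¹' a ∩ Z ⁻¹' c, W ω ∂P := by
    intro a c ha hc
    rw [hmove e' a c ha hc, hmove W a c ha hc]
    exact (cate_aux_master (MeasurableSpace.comap H inferInstance) P hH hε hT rfl
      hH.comap_le hindep hW hWvals hk hWdef he'sm he'01 he'ae (hgcm c hc)
      (hindc c hc) ha).symm
  have claim1 : P[W|𝓖'] =ᵐ[P] e' :=
    (ae_eq_condExp_of_forall_setIntegral_eq hmG hWint
      (fun s _ _ => he'int.integrableOn)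
      (fun s hs _ => hGsets e' W he'int hWint hbase1 s hs)
      ((he'sm.mono hm'G).aestronglyMeasurable)).symm
  -- Claim 1b
  have claim1b : P[(fun ω => 1 - W ω)|𝓖'] =ᵐ[P] fun ω => 1 - (P[W|𝓖']) ω := by
    have hsub := condExp_sub (m := 𝓖') (integrable_const (1:ℝ)) hWint
    have heq : ((fun _ => (1:ℝ)) - W) = fun ω => 1 - W ω := rfl
    have hc : P[(fun _ => (1:ℝ))|𝓖'] = fun _ => (1:ℝ) := condExp_const hmG 1
    rw [heq, hc] at hsub
    filter_upwards [hsub] with ω hω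
    rw [hω, Pi.sub_apply]
  -- Claim 2a
  have hWY₁int : Integrable (fun ω => W ω * Y₁ ω) P :=
    hY₁int.bdd_mul hW.aestronglyMeasurable (c := 1) (ae_of_all _ hWb)
  have hE'Y₁int : Integrable (fun ω => e' ω * Y₁ ω) P :=
    hY₁int.bdd_mul ((he'sm.mono hm'le).aestronglyMeasurable) (c := 1) (ae_of_all _ he'b)
  have hg1m : ∀ (c : Set 𝓩), MeasurableSet c →
      Measurable fun p : ℝ × ℝ × 𝓩 => Set.indicator c (fun _ => (1:ℝ)) p.2.2 * p.2.1 :=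
    fun c hc => (hgcm c hc).mul (measurable_fst.comp measurable_snd)
  have hg1int : ∀ (c : Set 𝓩), MeasurableSet c →
      Integrable (fun ω => Set.indicator c (fun _ => (1:ℝ)) (Z ω) * Y₁ ω) P := fun c hc =>
    hY₁int.bdd_mul ((measurable_const.indicator hc).comp hZ).aestronglyMeasurable
      (c := 1) (ae_of_all _ fun ω => by by_cases h : Z ω ∈ c <;> simp [h])
  have hbase2a : ∀ a c, MeasurableSet a → MeasurableSet c →
      ∫ ω in H ⁻¹' a ∩ Z ⁻¹' c, e' ω * Y₁ ω ∂P
        = ∫ ω in H ⁻¹' a ∩ Z ⁻¹' c, W ω * Y₁ ω ∂P := by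
    intro a c ha hc
    have h1 := hmove (fun ω => e' ω * Y₁ ω) a c ha hc
    have h2 := hmove (fun ω => W ω * Y₁ ω) a c ha hc
    have hmaster := cate_aux_master (MeasurableSpace.comap H inferInstance) P hH hε hT rfl
      hH.comap_le hindep hW hWvals hk hWdef he'sm he'01 he'ae (hg1m c hc) (hg1int c hc) ha
    have e1 : ∀ F : Ω → ℝ, (fun ω => F ω * Y₁ ω * Set.indicator c (fun _ => (1:ℝ)) (Z ω))
        = fun ω => F ω * (Set.indicator c (fun _ => (1:ℝ)) (Z ω) * Y₁ ω) := by
      intro F; funext ω; ring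
    rw [h1, h2, e1 e', e1 W]
    exact hmaster.symm
  have claim2a : P[(fun ω => W ω * Y₁ ω)|𝓖'] =ᵐ[P] fun ω => e' ω * (P[Y₁|𝓖']) ω := by
    have hcand_int : Integrable (fun ω => e' ω * (P[Y₁|𝓖']) ω) P :=
      integrable_condExp.bdd_mul ((he'sm.mono hm'le).aestronglyMeasurable) (c := 1) (ae_of_all _ he'b)
    have hcand_sm : AEStronglyMeasurable[𝓖'] (fun ω => e' ω * (P[Y₁|𝓖']) ω) P :=
      ((he'sm.mono hm'G).mul stronglyMeasurable_condExp).aestronglyMeasurable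
    refine (ae_eq_condExp_of_forall_setIntegral_eq hmG hWY₁int
      (fun s _ _ => hcand_int.integrableOn) (fun s hs _ => ?_) hcand_sm).symm
    have hφsm : StronglyMeasurable[𝓖'] (s.indicator e') := (he'sm.mono hm'G).indicator hs
    have hφb : ∀ ω, ‖s.indicator e' ω‖ ≤ 1 := fun ω => by
      by_cases h : ω ∈ s
      · rw [Set.indicator_of_mem h]; exact he'b ω
      · rw [Set.indicator_of_notMem h]; simp
    have hφY₁int : Integrable (s.indicator e' * Y₁) P :=
      hY₁int.bdd_mul ((hφsm.mono hmG).aestronglyMeasurable) (c := 1) (ae_of_all _ hφb)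
    have hpull := condExp_mul_of_stronglyMeasurable_left (m := 𝓖') hφsm hφY₁int hY₁int
    have hsm : MeasurableSet s := hmG _ hs
    calc ∫ ω in s, e' ω * (P[Y₁|𝓖']) ω ∂P
        = ∫ ω, s.indicator e' ω * (P[Y₁|𝓖']) ω ∂P := by
          rw [← integral_indicator hsm]
          congr 1
          funext ω
          rcases Classical.em (ω ∈ s) with h | h
          · rw [Set.indicator_of_mem h, Set.indicator_of_mem h]
          · rw [Set.indicator_of_notMem h, Set.indicator_of_notMem h, zero_mul]
      _ = ∫ ω, (P[s.indicator e' * Y₁|𝓖']) ω ∂P := (integral_congr_ae hpull).symm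
      _ = ∫ ω, (s.indicator e' * Y₁) ω ∂P := integral_condExp hmG
      _ = ∫ ω in s, e' ω * Y₁ ω ∂P := by
          rw [← integral_indicator hsm]
          congr 1
          funext ω
          rcases Classical.em (ω ∈ s) with h | h
          · rw [Set.indicator_of_mem h]
            show s.indicator e' ω * Y₁ ω = _
            rw [Set.indicator_of_mem h]
          · rw [Set.indicator_of_notMem h]
            show s.indicator e' ω * Y₁ ω = _
            rw [Set.indicator_of_notMem h, zero_mul]
      _ = ∫ ω in s, W ω * Y₁ ω ∂P :=
          hGsets _ _ hE'Y₁int hWY₁int hbase2a s hs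
  -- Claim 2b
  have hV₂b : ∀ ω, ‖(1:ℝ) - W ω‖ ≤ 1 := fun ω => by rcases hWvals ω with h | h <;> simp [h]
  have hV₂Y₀int : Integrable (fun ω => (1 - W ω) * Y₀ ω) P :=
    hY₀int.bdd_mul hV₂.aestronglyMeasurable (c := 1) (ae_of_all _ hV₂b)
  have hF'Y₀int : Integrable (fun ω => f' ω * Y₀ ω) P :=
    hY₀int.bdd_mul ((hf'sm.mono hm'le).aestronglyMeasurable) (c := 1) (ae_of_all _ hf'b)
  have hg0m : ∀ (c : Set 𝓩), MeasurableSet c →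
      Measurable fun p : ℝ × ℝ × 𝓩 => Set.indicator c (fun _ => (1:ℝ)) p.2.2 * p.1 :=
    fun c hc => (hgcm c hc).mul measurable_fst
  have hg0int : ∀ (c : Set 𝓩), MeasurableSet c →
      Integrable (fun ω => Set.indicator c (fun _ => (1:ℝ)) (Z ω) * Y₀ ω) P := fun c hc =>
    hY₀int.bdd_mul ((measurable_const.indicator hc).comp hZ).aestronglyMeasurable
      (c := 1) (ae_of_all _ fun ω => by by_cases h : Z ω ∈ c <;> simp [h])
  have hbase2b : ∀ a c, MeasurableSet a → MeasurableSet c →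
      ∫ ω in H ⁻¹' a ∩ Z ⁻¹' c, f' ω * Y₀ ω ∂P
        = ∫ ω in H ⁻¹' a ∩ Z ⁻¹' c, (1 - W ω) * Y₀ ω ∂P := by
    intro a c ha hc
    have h1 := hmove (fun ω => f' ω * Y₀ ω) a c ha hc
    have h2 := hmove (fun ω => (1 - W ω) * Y₀ ω) a c ha hc
    have hmaster := cate_aux_master (MeasurableSpace.comap H inferInstance) P hH hε hT rfl
      hH.comap_le hindep hV₂ hV₂vals (measurable_const.sub hk)
      (fun ω => by show 1 - W ω = 1 - k (H ω, ε ω); rw [hWdef ω])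
      hf'sm hf'01 hf'ae (hg0m c hc) (hg0int c hc) ha
    have e1 : ∀ F : Ω → ℝ, (fun ω => F ω * Y₀ ω * Set.indicator c (fun _ => (1:ℝ)) (Z ω))
        = fun ω => F ω * (Set.indicator c (fun _ => (1:ℝ)) (Z ω) * Y₀ ω) := by
      intro F; funext ω; ring
    have e2 : (fun ω => (1 - W ω) * Y₀ ω * Set.indicator c (fun _ => (1:ℝ)) (Z ω))
        = fun ω => (1 - W ω) * (Set.indicator c (fun _ => (1:ℝ)) (Z ω) * Y₀ ω) := by
      funext ω; ring
    rw [h1, h2, e1 f', e2]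
    exact hmaster.symm
  have claim2b : P[(fun ω => (1 - W ω) * Y₀ ω)|𝓖'] =ᵐ[P] fun ω => f' ω * (P[Y₀|𝓖']) ω := by
    have hcand_int : Integrable (fun ω => f' ω * (P[Y₀|𝓖']) ω) P :=
      integrable_condExp.bdd_mul ((hf'sm.mono hm'le).aestronglyMeasurable) (c := 1) (ae_of_all _ hf'b)
    have hcand_sm : AEStronglyMeasurable[𝓖'] (fun ω => f' ω * (P[Y₀|𝓖']) ω) P :=
      ((hf'sm.mono hm'G).mul stronglyMeasurable_condExp).aestronglyMeasurable
    refine (ae_eq_condExp_of_forall_setIntegral_eq hmG hV₂Y₀int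
      (fun s _ _ => hcand_int.integrableOn) (fun s hs _ => ?_) hcand_sm).symm
    have hφsm : StronglyMeasurable[𝓖'] (s.indicator f') := (hf'sm.mono hm'G).indicator hs
    have hφb : ∀ ω, ‖s.indicator f' ω‖ ≤ 1 := fun ω => by
      by_cases h : ω ∈ s
      · rw [Set.indicator_of_mem h]; exact hf'b ω
      · rw [Set.indicator_of_notMem h]; simp
    have hφY₀int : Integrable (s.indicator f' * Y₀) P :=
      hY₀int.bdd_mul ((hφsm.mono hmG).aestronglyMeasurable) (c := 1) (ae_of_all _ hφb)
    have hpull := condExp_mul_of_stronglyMeasurable_left (m := 𝓖') hφsm hφY₀int hY₀int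
    have hsm : MeasurableSet s := hmG _ hs
    calc ∫ ω in s, f' ω * (P[Y₀|𝓖']) ω ∂P
        = ∫ ω, s.indicator f' ω * (P[Y₀|𝓖']) ω ∂P := by
          rw [← integral_indicator hsm]
          congr 1
          funext ω
          rcases Classical.em (ω ∈ s) with h | h
          · rw [Set.indicator_of_mem h, Set.indicator_of_mem h]
          · rw [Set.indicator_of_notMem h, Set.indicator_of_notMem h, zero_mul]
      _ = ∫ ω, (P[s.indicator f' * Y₀|𝓖']) ω ∂P := (integral_congr_ae hpull).symm
      _ = ∫ ω, (s.indicator f' * Y₀) ω ∂P := integral_condExp hmG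
      _ = ∫ ω in s, f' ω * Y₀ ω ∂P := by
          rw [← integral_indicator hsm]
          congr 1
          funext ω
          rcases Classical.em (ω ∈ s) with h | h
          · rw [Set.indicator_of_mem h]
            show s.indicator f' ω * Y₀ ω = _
            rw [Set.indicator_of_mem h]
          · rw [Set.indicator_of_notMem h]
            show s.indicator f' ω * Y₀ ω = _
            rw [Set.indicator_of_notMem h, zero_mul]
      _ = ∫ ω in s, (1 - W ω) * Y₀ ω ∂P :=
          hGsets _ _ hF'Y₀int hV₂Y₀int hbase2b s hs
  -- final assembly
  have hWY : (fun ω => W ω * Y ω) = fun ω => W ω * Y₁ ω := by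
    funext ω; rw [hconsistency ω]; rcases hWvals ω with h | h <;> rw [h] <;> ring
  have hWY' : (fun ω => (1 - W ω) * Y ω) = fun ω => (1 - W ω) * Y₀ ω := by
    funext ω; rw [hconsistency ω]; rcases hWvals ω with h | h <;> rw [h] <;> ring
  have hsubG : P[Y₁ - Y₀|𝓖'] =ᵐ[P] P[Y₁|𝓖'] - P[Y₀|𝓖'] := condExp_sub hY₁int hY₀int 𝓖'
  have hgoalfun : (fun ω => Y₁ ω - Y₀ ω) = Y₁ - Y₀ := rfl
  rw [hWY, hWY', hgoalfun]
  filter_upwards [claim1, claim1b, claim2a, claim2b, hoverlap, hsubG, hf'rel]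
    with ω h1 h1b h2a h2b hov hsub hf
  have h0 : 0 < e' ω := by rw [← h1]; exact hov.1
  have h1' : e' ω < 1 := by rw [← h1]; exact hov.2
  have h1ne : (1:ℝ) - e' ω ≠ 0 := sub_ne_zero.mpr (ne_of_gt h1')
  rw [hsub, h2a, h2b, h1b, h1, hf, Pi.sub_apply,
    mul_div_cancel_left₀ _ (ne_of_gt h0), mul_div_cancel_left₀ _ h1ne]

/-- **Identifiability of the CATE augmented with the learned substitute** (Corollary to
Theorem 1): if `W = k(H, ε)` with `ε` conditionally independent of `(Y₀, Y₁, Z)` given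
`σ(H)`, consistency holds, and overlap holds for `𝓖' = σ(H) ⊔ σ(Z)`, then the augmented
CATE is identified from the observed data. -/
theorem cate_identifiability_with_substitute
    {Ω : Type*} [MeasurableSpace Ω] [StandardBorelSpace Ω]
    {𝓗 E 𝓩 : Type*}
    [MeasurableSpace 𝓗] [StandardBorelSpace 𝓗]
    [MeasurableSpace E] [StandardBorelSpace E]
    [MeasurableSpace 𝓩] [StandardBorelSpace 𝓩]
    (P : Measure Ω) [IsProbabilityMeasure P]
    (Y₀ Y₁ W Y : Ω → ℝ) (H : Ω → 𝓗) (ε : Ω → E) (Z : Ω → 𝓩)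
    (hY₀ : Measurable Y₀) (hY₁ : Measurable Y₁)
    (hW : Measurable W) (hH : Measurable H) (hε : Measurable ε) (hZ : Measurable Z)
    (hY₀int : Integrable Y₀ P) (hY₁int : Integrable Y₁ P)
    (hWvals : ∀ ω, W ω = 0 ∨ W ω = 1)
    (k : 𝓗 × E → ℝ) (hk : Measurable k)
    (hWdef : ∀ ω, W ω = k (H ω, ε ω))
    (hindep : CondIndepFun (MeasurableSpace.comap H inferInstance) hH.comap_le
      ε (fun ω => (Y₀ ω, Y₁ ω, Z ω)) P)
    (hconsistency : ∀ ω, Y ω = W ω * Y₁ ω + (1 - W ω) * Y₀ ω)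
    (𝓖' : MeasurableSpace Ω)
    (h𝓖' : 𝓖' = MeasurableSpace.comap H inferInstance ⊔ MeasurableSpace.comap Z inferInstance)
    (hoverlap : ∀ᵐ ω ∂P, 0 < (P[W | 𝓖']) ω ∧ (P[W | 𝓖']) ω < 1) :
    ∀ᵐ ω ∂P,
      (P[fun ω => Y₁ ω - Y₀ ω | 𝓖']) ω =
        (P[fun ω => W ω * Y ω | 𝓖']) ω / (P[W | 𝓖']) ω
        - (P[fun ω => (1 - W ω) * Y ω | 𝓖']) ω / (P[fun ω => 1 - W ω | 𝓖']) ω :=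
  cate_main_aux 𝓖' P Y₀ Y₁ W Y H ε Z hY₀ hY₁ hW hH hε hZ hY₀int hY₁int hWvals k hk hWdef
    hindep hconsistency h𝓖' hoverlap
end

section
/- Generalization bound for the weighted PEHE (first part of the theorem, noiseless squared-loss version): let (R, 𝓑) be a measurable space with probability measure ρ, let e : R → ℝ be measurable with 0 < e(r) < 1 for all r, set u = ∫ e dρ and assume 0 < u < 1, and define the treatment-arm measures ρ₁(A) = (1/u) ∫_A e dρ and ρ₀(A) = (1/(1−u)) ∫_A (1−e) dρ. Let m₁, m₀, f₁, f₀ : R → ℝ be measurable with squared losses ℓ₁ = (m₁ − f₁)² and ℓ₀ = (m₀ − f₀)² integrable with respect to ρ, ρ₁ and ρ₀. Let G be a set of measurable functions R → ℝ, let B > 0 with ℓ₁/B ∈ G and ℓ₀/B ∈ G, and define IPM_G(μ, ν) = sup_{g ∈ G} |∫ g dμ − ∫ g dν|, assumed finite on (ρ₁, ρ₀). Then the PEHE ∫ ((m₁ − m₀) − (f₁ − f₀))² dρ is at most 2 (∫ ℓ₁ dρ₁ + ∫ ℓ₀ dρ₀) + 2 B · IPM_G(ρ₁, ρ₀). -/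
open MeasureTheory
open scoped ENNReal

/-- **Generalization bound for the weighted PEHE** (first part of the theorem, noiseless
squared-loss version): the PEHE over the target population `ρ` is at most twice the sum of
the factual risks on the two treatment arms plus `2 B` times the Integral Probability
Metric between the treated and control covariate distributions `ρ₁` and `ρ₀`. -/
theorem pehe_generalization_bound
    {R : Type*} [MeasurableSpace R]
    (ρ : Measure R) [IsProbabilityMeasure ρ]
    (e : R → ℝ) (he : Measurable e) (he01 : ∀ r, 0 < e r ∧ e r < 1)
    (u : ℝ) (hu : u = ∫ r, e r ∂ρ) (hu0 : 0 < u) (hu1 : u < 1)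
    (ρ₁ ρ₀ : Measure R)
    (hρ₁ : ρ₁ = (ENNReal.ofReal u)⁻¹ • ρ.withDensity (fun r => ENNReal.ofReal (e r)))
    (hρ₀ : ρ₀ = (ENNReal.ofReal (1 - u))⁻¹ •
      ρ.withDensity (fun r => ENNReal.ofReal (1 - e r)))
    (m₁ m₀ f₁ f₀ : R → ℝ)
    (hm₁ : Measurable m₁) (hm₀ : Measurable m₀)
    (hf₁ : Measurable f₁) (hf₀ : Measurable f₀)
    (hℓ₁ρ : Integrable (fun r => (m₁ r - f₁ r) ^ 2) ρ)
    (hℓ₁ρ₁ : Integrable (fun r => (m₁ r - f₁ r) ^ 2) ρ₁)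
    (hℓ₁ρ₀ : Integrable (fun r => (m₁ r - f₁ r) ^ 2) ρ₀)
    (hℓ₀ρ : Integrable (fun r => (m₀ r - f₀ r) ^ 2) ρ)
    (hℓ₀ρ₁ : Integrable (fun r => (m₀ r - f₀ r) ^ 2) ρ₁)
    (hℓ₀ρ₀ : Integrable (fun r => (m₀ r - f₀ r) ^ 2) ρ₀)
    (G : Set (R → ℝ)) (hG : ∀ g ∈ G, Measurable g)
    (B : ℝ) (hB : 0 < B)
    (hℓ₁G : (fun r => (m₁ r - f₁ r) ^ 2 / B) ∈ G)
    (hℓ₀G : (fun r => (m₀ r - f₀ r) ^ 2 / B) ∈ G)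
    (hIPMfin : BddAbove ((fun g : R → ℝ => |(∫ r, g r ∂ρ₁) - ∫ r, g r ∂ρ₀|) '' G)) :
    ∫ r, ((m₁ r - m₀ r) - (f₁ r - f₀ r)) ^ 2 ∂ρ ≤
      2 * ((∫ r, (m₁ r - f₁ r) ^ 2 ∂ρ₁) + ∫ r, (m₀ r - f₀ r) ^ 2 ∂ρ₀)
        + 2 * B * sSup ((fun g : R → ℝ => |(∫ r, g r ∂ρ₁) - ∫ r, g r ∂ρ₀|) '' G) := by
  set S := sSup ((fun g : R → ℝ => |(∫ r, g r ∂ρ₁) - ∫ r, g r ∂ρ₀|) '' G) with hS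
  -- decomposition of the integral over ρ
  have hdec : ∀ g : R → ℝ, Measurable g → (∀ r, 0 ≤ g r) → Integrable g ρ →
      ∫ r, g r ∂ρ = u * ∫ r, g r ∂ρ₁ + (1 - u) * ∫ r, g r ∂ρ₀ := by
    intro g hg hg0 hgi
    have hbd1 : Integrable (fun r => e r * g r) ρ := by
      refine hgi.mono' (he.mul hg).aestronglyMeasurable (Filter.Eventually.of_forall ?_)
      intro r
      have h := he01 r
      rw [Real.norm_eq_abs, abs_of_nonneg (mul_nonneg h.1.le (hg0 r))]
      nlinarith [hg0 r]
    have hbd0 : Integrable (fun r => (1 - e r) * g r) ρ := by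
      refine hgi.mono' ((measurable_const.sub he).mul hg).aestronglyMeasurable
        (Filter.Eventually.of_forall ?_)
      intro r
      have h := he01 r
      rw [Real.norm_eq_abs, abs_of_nonneg (mul_nonneg (by linarith [h.2]) (hg0 r))]
      nlinarith [hg0 r]
    have h1 : ∫ r, g r ∂ρ₁ = u⁻¹ * ∫ r, e r * g r ∂ρ := by
      rw [hρ₁, integral_smul_measure]
      have hd : (fun r => ENNReal.ofReal (e r)) = fun r => ((e r).toNNReal : ℝ≥0∞) := rfl
      rw [hd, integral_withDensity_eq_integral_smul (he.real_toNNReal)]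
      have : ∀ r, (e r).toNNReal • g r = e r * g r := by
        intro r
        rw [NNReal.smul_def, Real.coe_toNNReal _ (he01 r).1.le, smul_eq_mul]
      simp only [this, smul_eq_mul]
      rw [ENNReal.toReal_inv, ENNReal.toReal_ofReal hu0.le]
    have h0 : ∫ r, g r ∂ρ₀ = (1 - u)⁻¹ * ∫ r, (1 - e r) * g r ∂ρ := by
      rw [hρ₀, integral_smul_measure]
      have hd : (fun r => ENNReal.ofReal (1 - e r)) = fun r => ((1 - e r).toNNReal : ℝ≥0∞) := rfl
      rw [hd, integral_withDensity_eq_integral_smul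
        ((show Measurable (fun r => 1 - e r) from measurable_const.sub he).real_toNNReal)]
      have : ∀ r, (1 - e r).toNNReal • g r = (1 - e r) * g r := by
        intro r
        rw [NNReal.smul_def, Real.coe_toNNReal _ (by linarith [(he01 r).2]), smul_eq_mul]
      simp only [this, smul_eq_mul]
      rw [ENNReal.toReal_inv, ENNReal.toReal_ofReal (by linarith)]
    have hsum : ∫ r, e r * g r ∂ρ + ∫ r, (1 - e r) * g r ∂ρ = ∫ r, g r ∂ρ := by
      rw [← integral_add hbd1 hbd0]
      congr 1; funext r; ring
    rw [h1, h0]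
    have hu1' : (1 : ℝ) - u ≠ 0 := by linarith
    field_simp
    linarith [hsum]
  -- pointwise bound and first inequality
  have hint : Integrable (fun r => ((m₁ r - m₀ r) - (f₁ r - f₀ r)) ^ 2) ρ := by
    refine ((hℓ₁ρ.const_mul 2).add (hℓ₀ρ.const_mul 2)).mono'
      ?_ (Filter.Eventually.of_forall fun r => ?_)
    · exact (((hm₁.sub hm₀).sub (hf₁.sub hf₀)).pow_const 2).aestronglyMeasurable
    · rw [Real.norm_eq_abs, abs_of_nonneg (sq_nonneg _)]; simp only [Pi.add_apply]; nlinarith [sq_nonneg (m₁ r - f₁ r + (m₀ r - f₀ r))]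
  have step1 : ∫ r, ((m₁ r - m₀ r) - (f₁ r - f₀ r)) ^ 2 ∂ρ ≤
      2 * (∫ r, (m₁ r - f₁ r) ^ 2 ∂ρ) + 2 * (∫ r, (m₀ r - f₀ r) ^ 2 ∂ρ) := by
    rw [← integral_const_mul, ← integral_const_mul,
      ← integral_add (hℓ₁ρ.const_mul 2) (hℓ₀ρ.const_mul 2)]
    refine integral_mono hint ((hℓ₁ρ.const_mul 2).add (hℓ₀ρ.const_mul 2)) fun r => ?_
    nlinarith [sq_nonneg (m₁ r - f₁ r + (m₀ r - f₀ r))]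
  -- IPM bounds
  have hipm : ∀ g : R → ℝ, g ∈ G → |(∫ r, g r ∂ρ₁) - ∫ r, g r ∂ρ₀| ≤ S :=
    fun g hg => le_csSup hIPMfin ⟨g, hg, rfl⟩
  have hS0 : 0 ≤ S := le_trans (abs_nonneg _) (hipm _ hℓ₁G)
  have hb1 : ∫ r, (m₁ r - f₁ r) ^ 2 ∂ρ₀ ≤ ∫ r, (m₁ r - f₁ r) ^ 2 ∂ρ₁ + B * S := by
    have h := hipm _ hℓ₁G
    simp only [integral_div] at h
    have := neg_abs_le (((∫ r, (m₁ r - f₁ r) ^ 2 ∂ρ₁) / B) - (∫ r, (m₁ r - f₁ r) ^ 2 ∂ρ₀) / B)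
    have hB' := hB
    rw [div_sub_div_same] at this h
    have h2 : -(B * S) ≤ (∫ r, (m₁ r - f₁ r) ^ 2 ∂ρ₁) - ∫ r, (m₁ r - f₁ r) ^ 2 ∂ρ₀ := by
      have := (abs_le.mp h).1
      rw [le_div_iff₀ hB] at this
      linarith
    linarith
  have hb0 : ∫ r, (m₀ r - f₀ r) ^ 2 ∂ρ₁ ≤ ∫ r, (m₀ r - f₀ r) ^ 2 ∂ρ₀ + B * S := by
    have h := hipm _ hℓ₀G
    simp only [integral_div] at h
    rw [div_sub_div_same] at h
    have := (abs_le.mp h).2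
    rw [div_le_iff₀ hB] at this
    linarith
  -- decompose both factual risks
  have hd1 := hdec (fun r => (m₁ r - f₁ r) ^ 2) ((hm₁.sub hf₁).pow_const 2) (fun r => sq_nonneg _) hℓ₁ρ
  have hd0 := hdec (fun r => (m₀ r - f₀ r) ^ 2) ((hm₀.sub hf₀).pow_const 2) (fun r => sq_nonneg _) hℓ₀ρ
  rw [hd1, hd0] at step1
  refine le_trans step1 ?_
  nlinarith [mul_nonneg (mul_nonneg hB.le hS0) hu0.le,
    mul_le_mul_of_nonneg_left hb1 (by linarith : (0:ℝ) ≤ 1 - u),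
    mul_le_mul_of_nonneg_left hb0 hu0.le]
end
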